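/- arXiv:1807.11251 — 9 statements merged into one kernel-verified Lean document; each statement's English description precedes it below -/
import Mathlib

section
/- Every quasi-ordered ring (R, ⪯) with -1 ≺ 0 is an ordered ring; in particular, x ⪯ y implies x + z ⪯ y + z for all z. -/
variable {R : Type*} [Ring R]

/-- A quasi-ordering on a unital ring `R` (Definition 2.2 of the paper):
a reflexive, transitive, total binary relation satisfying (QR1)-(QR4).
Here `x ∼ y` means `p x y ∧ p y x` and `x ≺ y` means `p x y ∧ ¬ p y x`. -/
structure IsQuasiOrdering (p : R → R → Prop) : Prop where
  refl : ∀ x, p x x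
  trans : ∀ x y z, p x y → p y z → p x z
  total : ∀ x y, p x y ∨ p y x
  qr1 : p 0 1 ∧ ¬ p 1 0
  qr2 : ∀ a b x y, p 0 a → p 0 b → p x y → p (a * x * b) (a * y * b)
  qr3 : ∀ a b x y, p 0 a → ¬ p a 0 → p 0 b → ¬ p b 0 → p (a * x * b) (a * y * b) → p x y
  qr4 : ∀ x y z, ¬ (p z y ∧ p y z) → p x y → p (x + z) (y + z)

/-- An ordering on a unital ring `R` (Definition 2.6 of the paper):
a reflexive, transitive, total binary relation satisfying (O1)-(O4). -/
structure IsOrderingRel (p : R → R → Prop) : Prop where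
  refl : ∀ x, p x x
  trans : ∀ x y z, p x y → p y z → p x z
  total : ∀ x y, p x y ∨ p y x
  o1 : p 0 1 ∧ ¬ p 1 0
  o2 : ∀ a b x y, p 0 a → p 0 b → p x y → p (a * x * b) (a * y * b)
  o3 : ∀ x y, p (x * y) 0 → p x 0 ∨ p y 0
  o4 : ∀ x y z, p x y → p (x + z) (y + z)

/-- Proposition 2.9: every quasi-ordered ring with -1 ≺ 0 is an ordered ring;
in particular the full translation axiom (O4) holds. -/
theorem isOrderingRel_of_isQuasiOrdering (p : R → R → Prop) (hp : IsQuasiOrdering p)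
    (h1 : p (-1) 0) (h2 : ¬ p 0 (-1)) :
    IsOrderingRel p ∧ ∀ x y z : R, p x y → p (x + z) (y + z) := by
  obtain ⟨hrefl, htrans, htotal, ⟨h01, h10⟩, hqr2, hqr3, hqr4⟩ := hp
  -- negation flips the sign
  have neg1 : ∀ a : R, p 0 a → p (-a) 0 := by
    intro a ha
    have h := hqr2 1 a (-1) 0 h01 ha h1
    rw [show (1:R) * (-1) * a = -a by (first | abel1 | simp), show (1:R) * 0 * a = 0 by (first | abel1 | simp)] at h
    exact h
  have neg2 : ∀ a : R, p a 0 → p 0 (-a) := by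
    intro a ha
    by_contra hc
    have h := hqr4 a 0 (-a) (fun hh => hc hh.2) ha
    rw [show a + -a = (0:R) by (first | abel1 | simp), show (0:R) + -a = -a by (first | abel1 | simp)] at h
    exact hc h
  -- if a ∼ 0 then 1 + a ∼ 1
  have oneadd : ∀ a : R, p a 0 → p 0 a → p (1+a) 1 ∧ p 1 (1+a) := by
    intro a ha0 h0a
    constructor
    · have h := hqr4 a 0 1 (fun hh => h10 hh.1) ha0
      rw [show a + 1 = 1 + a by (first | abel1 | simp), show (0:R) + 1 = 1 by (first | abel1 | simp)] at h
      exact h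
    · have h := hqr4 0 a 1 (fun hh => h10 (htrans 1 a 0 hh.1 ha0)) h0a
      rw [show (0:R) + 1 = 1 by (first | abel1 | simp), show a + 1 = 1 + a by (first | abel1 | simp)] at h
      exact h
  -- if 1 + c ∼ 1 then c ∼ 0
  have unadd : ∀ c : R, p (1+c) 1 → p 1 (1+c) → p c 0 ∧ p 0 c := by
    intro c hu hl
    constructor
    · have h := hqr4 (1+c) 1 (-1) (fun hh => h10 (htrans 1 (-1) 0 hh.2 h1)) hu
      rw [show 1 + c + -1 = c by (first | abel1 | simp), show (1:R) + -1 = 0 by (first | abel1 | simp)] at h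
      exact h
    · have h := hqr4 1 (1+c) (-1)
        (fun hh => h10 (htrans 1 (1+c) 0 hl (htrans (1+c) (-1) 0 hh.2 h1))) hl
      rw [show (1:R) + -1 = 0 by (first | abel1 | simp), show 1 + c + -1 = c by (first | abel1 | simp)] at h
      exact h
  -- the set of elements ∼ 0 is closed under addition
  have lemI : ∀ a b : R, p a 0 → p 0 a → p b 0 → p 0 b → p (a+b) 0 ∧ p 0 (a+b) := by
    intro a b ha0 h0a hb0 h0b
    obtain ⟨ha1, h1a⟩ := oneadd a ha0 h0a
    obtain ⟨hb1, h1b⟩ := oneadd b hb0 h0b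
    have s1 := hqr4 (1+a) 1 b (fun hh => h10 (htrans 1 b 0 hh.2 hb0)) ha1
    -- s1 : p (1+a+b) (1+b)
    have s2 := hqr4 1 (1+a) b
      (fun hh => h10 (htrans 1 (1+a) 0 h1a (htrans (1+a) b 0 hh.2 hb0))) h1a
    -- s2 : p (1+b) (1+a+b)
    have hu : p (1+(a+b)) 1 := by
      have := htrans (1+a+b) (1+b) 1 s1 hb1
      rw [show 1 + a + b = 1 + (a+b) by (first | abel1 | simp)] at this
      exact this
    have hl : p 1 (1+(a+b)) := by
      have := htrans 1 (1+b) (1+a+b) h1b s2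
      rw [show 1 + a + b = 1 + (a+b) by (first | abel1 | simp)] at this
      exact this
    exact unadd (a+b) hu hl
  -- adding an element ∼ 0 preserves ∼
  have shift : ∀ c w : R, p c 0 → p 0 c → p (w+c) w ∧ p w (w+c) := by
    intro c w hc0 h0c
    by_cases hcw : p c w ∧ p w c
    · have hw0 : p w 0 := htrans w c 0 hcw.2 hc0
      have h0w : p 0 w := htrans 0 c w h0c hcw.1
      obtain ⟨hs0, h0s⟩ := lemI w c hw0 h0w hc0 h0c
      exact ⟨htrans (w+c) 0 w hs0 h0w, htrans w 0 (w+c) hw0 h0s⟩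
    · constructor
      · have h := hqr4 c 0 w
          (fun hh => hcw ⟨htrans c 0 w hc0 hh.2, htrans w 0 c hh.1 h0c⟩) hc0
        rw [show c + w = w + c by (first | abel1 | simp), show (0:R) + w = w by (first | abel1 | simp)] at h
        exact h
      · have h := hqr4 0 c w (fun hh => hcw ⟨hh.2, hh.1⟩) h0c
        rw [show (0:R) + w = w by (first | abel1 | simp), show c + w = w + c by (first | abel1 | simp)] at h
        exact h
  -- x ≤ y implies 0 ≤ y - x
  have B2 : ∀ x y : R, p x y → p 0 (y - x) := by
    intro x y hxy
    by_cases hyy : p (-y) y ∧ p y (-y)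
    · -- then y ∼ 0
      have hy : p y 0 ∧ p 0 y := by
        rcases htotal 0 y with h0y | hy0
        · exact ⟨htrans y (-y) 0 hyy.2 (neg1 y h0y), h0y⟩
        · exact ⟨hy0, htrans 0 (-y) y (neg2 y hy0) hyy.1⟩
      have hx0 : p x 0 := htrans x y 0 hxy hy.1
      have h0nx : p 0 (-x) := neg2 x hx0
      by_cases hynx : p y (-x) ∧ p (-x) y
      · have hnx0 : p (-x) 0 := htrans (-x) y 0 hynx.2 hy.1
        obtain ⟨_, hfin⟩ := lemI y (-x) hy.1 hy.2 hnx0 h0nx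
        rw [show y + -x = y - x by (first | abel1 | simp)] at hfin
        exact hfin
      · have h := hqr4 0 (-x) y hynx h0nx
        rw [show (0:R) + y = y by (first | abel1 | simp), show -x + y = y - x by (first | abel1 | simp)] at h
        exact htrans 0 y (y-x) hy.2 h
    · have h := hqr4 x y (-y) hyy hxy
      rw [show x + -y = x - y by (first | abel1 | simp), show y + -y = (0:R) by (first | abel1 | simp)] at h
      have h' := neg2 (x-y) h
      rw [show -(x-y) = y - x by (first | abel1 | simp)] at h'
      exact h'
  -- full translation axiom
  have O4 : ∀ x y z : R, p x y → p (x+z) (y+z) := by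
    intro x y z hxy
    by_contra hc
    have hyx : p (y+z) (x+z) := (htotal (x+z) (y+z)).resolve_left hc
    have hd1 : p 0 (y - x) := B2 x y hxy
    have hd2 : p 0 (x - y) := by
      have h := B2 (y+z) (x+z) hyx
      rw [show x + z - (y+z) = x - y by (first | abel1 | simp)] at h
      exact h
    have hd1' : p (y-x) 0 := by
      have h := neg1 (x-y) hd2
      rw [show -(x-y) = y - x by (first | abel1 | simp)] at h
      exact h
    obtain ⟨_, hs⟩ := shift (y-x) (x+z) hd1' hd1
    rw [show x + z + (y-x) = y + z by (first | abel1 | simp)] at hs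
    exact hc hs
  refine ⟨⟨hrefl, htrans, htotal, ⟨h01, h10⟩, hqr2, ?_, O4⟩, O4⟩
  intro x y hxy0
  by_contra hc
  rw [not_or] at hc
  obtain ⟨hx, hy⟩ := hc
  have h0x : p 0 x := (htotal x 0).resolve_left hx
  have h0y : p 0 y := (htotal y 0).resolve_left hy
  have hprod : p (x*1*y) (x*0*y) := by
    rw [show x*1*y = x*y by (first | abel1 | simp), show x*0*y = (0:R) by (first | abel1 | simp)]
    exact hxy0
  exact h10 (hqr3 x y 1 0 h0x hx h0y hy hprod)
end

section
/- Let (R, ⪯) be a quasi-ordered ring with 0 ≺ -1. Then 0 ⪯ x for all x ∈ R. -/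
variable {R : Type*} [Ring R]

/-- Lemma 2.12: if 0 ≺ -1, then 0 ⪯ x for all x. -/
theorem quasiOrdering_nonneg_of_neg_one_pos (p : R → R → Prop) (hp : IsQuasiOrdering p)
    (hneg : p 0 (-1) ∧ ¬ p (-1) 0) : ∀ x : R, p 0 x := by
  intro x
  by_cases h : p 0 x
  · exact h
  · have hx0 : p x 0 := (hp.total x 0).resolve_right h
    have hnx : p (-x) 0 := by
      have := hp.qr2 (-1) 1 x 0 hneg.1 hp.qr1.1 hx0
      simpa using this
    have := hp.qr4 (-x) 0 x (fun hc => h hc.2) hnx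
    simpa using this
end

section
/- Let (R, ⪯) be a quasi-ordered ring with 0 ≺ -1, and let q be its support. On H := (R \ q)/∼ define [x]·[y] := [xy] and [x] ≤ [y] :⟺ y ⪯ x. Then (H, ·, ≤) is a totally ordered cancellative semigroup (multiplication and order are well-defined, [1] is neutral, the order is compatible with multiplication, and multiplication is cancellative). -/
variable {R : Type*} [Ring R]

/-- The equivalence relation x ∼ y induced by a quasi-ordering. -/
def QSim (p : R → R → Prop) (x y : R) : Prop := p x y ∧ p y x

/-- Lemma 2.13: for a quasi-ordered ring with 0 ≺ -1, the quotient
H = (R \\ q)/∼ with [x]·[y] := [xy] and [x] ≤ [y] :↔ y ⪯ x is a totally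
ordered cancellative semigroup with neutral element [1].  Stated on
representatives: multiplication is well-defined and closed on R \\ q,
[1] is neutral, multiplication is associative, the order is total,
compatible with multiplication, and multiplication is cancellative. -/
theorem quotient_totally_ordered_cancellative_semigroup (p : R → R → Prop)
    (hp : IsQuasiOrdering p) (hneg : p 0 (-1) ∧ ¬ p (-1) 0) :
    (∀ x x' y y' : R, QSim p x x' → QSim p y y' → QSim p (x * y) (x' * y')) ∧
    (∀ x y : R, ¬ QSim p x 0 → ¬ QSim p y 0 → ¬ QSim p (x * y) 0) ∧
    (∀ x : R, QSim p (1 * x) x ∧ QSim p (x * 1) x) ∧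
    (∀ x y z : R, QSim p (x * y * z) (x * (y * z))) ∧
    (∀ x y : R, p x y ∨ p y x) ∧
    (∀ a b x y : R, ¬ QSim p a 0 → ¬ QSim p b 0 → p y x → p (a * y * b) (a * x * b)) ∧
    (∀ a b x y : R, ¬ QSim p a 0 → ¬ QSim p b 0 → QSim p (a * x * b) (a * y * b) →
      QSim p x y) := by

  -- Lemma 2.10: every element is nonnegative.
  have hnegx : ∀ x : R, p 0 (-x) → p 0 x := by
    intro x h
    have := hp.qr2 (-1) 1 0 (-x) hneg.1 hp.qr1.1 h
    simpa using this
  have pos : ∀ x : R, p 0 x := by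
    intro x
    by_contra h
    have hx0 : p x 0 := (hp.total x 0).resolve_right h
    have hns : ¬ (p (-x) 0 ∧ p 0 (-x)) := fun hs => h (hnegx x hs.2)
    have := hp.qr4 x 0 (-x) hns hx0
    simp only [add_neg_cancel, zero_add] at this
    exact h (hnegx x this)
  refine ⟨?_, ?_, ?_, ?_, hp.total, ?_, ?_⟩
  · intro x x' y y' hx hy
    constructor
    · have h1 : p (x * y * 1) (x * y' * 1) := hp.qr2 x 1 y y' (pos x) (pos 1) hy.1
      have h2 : p (1 * x * y') (1 * x' * y') := hp.qr2 1 y' x x' (pos 1) (pos y') hx.1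
      simp only [mul_one, one_mul] at h1 h2
      exact hp.trans _ _ _ h1 h2
    · have h1 : p (x' * y' * 1) (x' * y * 1) := hp.qr2 x' 1 y' y (pos x') (pos 1) hy.2
      have h2 : p (1 * x' * y) (1 * x * y) := hp.qr2 1 y x' x (pos 1) (pos y) hx.2
      simp only [mul_one, one_mul] at h1 h2
      exact hp.trans _ _ _ h1 h2
  · intro x y hx hy hxy
    have hx0 : ¬ p x 0 := fun h => hx ⟨h, pos x⟩
    have hy0 : ¬ p y 0 := fun h => hy ⟨h, pos y⟩
    have h1 : p (x * y * 1) (x * 0 * 1) := by simpa using hxy.1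
    exact hy0 (hp.qr3 x 1 y 0 (pos x) hx0 hp.qr1.1 hp.qr1.2 h1)
  · intro x
    constructor <;> constructor <;> simp [hp.refl]
  · intro x y z
    rw [mul_assoc]
    exact ⟨hp.refl _, hp.refl _⟩
  · intro a b x y ha hb h
    exact hp.qr2 a b y x (pos a) (pos b) h
  · intro a b x y ha hb h
    have ha0 : ¬ p a 0 := fun h' => ha ⟨h', pos a⟩
    have hb0 : ¬ p b 0 := fun h' => hb ⟨h', pos b⟩
    exact ⟨hp.qr3 a b x y (pos a) ha0 (pos b) hb0 h.1,
           hp.qr3 a b y x (pos a) ha0 (pos b) hb0 h.2⟩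
end

section
/- Define on the set of quasi-orderings of a unital ring R the relation ⪯₁ ≤ ⪯₂ :⟺ (for all x,y: 0 ⪯₁ x ⪯₁ y implies x ⪯₂ y). Then ≤ is a partial order: reflexive, transitive, and antisymmetric. -/
variable {R : Type*} [Ring R]

/-- `p₁` is finer than `p₂` (Definition 3.1 of the paper):
`0 ⪯₁ x ⪯₁ y` implies `x ⪯₂ y`. -/
def Coarser (p₁ p₂ : R → R → Prop) : Prop :=
  ∀ x y : R, p₁ 0 x → p₁ x y → p₂ x y


private lemma qo_neg_of_neg {p : R → R → Prop} (h : IsQuasiOrdering p) {x : R}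
    (hx : ¬ p 0 x) : ¬ p (-x) 0 := by
  intro hnx
  have := h.qr4 (-x) 0 x (fun hc => hx hc.2) hnx
  rw [neg_add_cancel, zero_add] at this
  exact hx this

private lemma qo_flip {p : R → R → Prop} (h : IsQuasiOrdering p) {x y : R}
    (hx : ¬ p 0 x) (hy : ¬ p 0 y) (hxy : p x y) : p (-y) (-x) := by
  have hny := qo_neg_of_neg h hy
  have hnx := qo_neg_of_neg h hx
  have hy0 : p y 0 := (h.total y 0).resolve_right hy
  have s1 : p (x + -y) (y + -y) := h.qr4 x y (-y)
    (fun hc => hny (h.trans _ _ _ hc.1 hy0)) hxy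
  rw [add_neg_cancel] at s1
  have s2 : p (x + -y + -x) (0 + -x) := h.qr4 _ 0 (-x)
    (fun hc => hnx hc.1) s1
  have e : x + -y + -x = -y := by abel
  rw [e, zero_add] at s2
  exact s2

private lemma qo_unflip {p : R → R → Prop} (h : IsQuasiOrdering p) {x y : R}
    (hx : ¬ p 0 x) (hy : ¬ p 0 y) (hxy : p (-y) (-x)) : p x y := by
  have hnx := qo_neg_of_neg h hx
  have hy0 : p y 0 := (h.total y 0).resolve_right hy
  have s1 : p (-y + y) (-x + y) := h.qr4 (-y) (-x) y
    (fun hc => hnx (h.trans _ _ _ hc.2 hy0)) hxy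
  rw [neg_add_cancel] at s1
  have s2 : p (0 + x) (-x + y + x) := h.qr4 0 (-x + y) x
    (fun hc => hx (h.trans _ _ _ s1 hc.2)) s1
  have e : -x + y + x = y := by abel
  rw [e, zero_add] at s2
  exact s2

/-- Proposition 3.5: the finer/coarser relation is a partial order on the set
of all quasi-orderings of R: reflexive, transitive and antisymmetric. -/
theorem coarser_partialOrder (p₁ p₂ p₃ : R → R → Prop)
    (h1 : IsQuasiOrdering p₁) (h2 : IsQuasiOrdering p₂) (h3 : IsQuasiOrdering p₃) :
    Coarser p₁ p₁ ∧
    (Coarser p₁ p₂ → Coarser p₂ p₃ → Coarser p₁ p₃) ∧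
    (Coarser p₁ p₂ → Coarser p₂ p₁ → p₁ = p₂) := by
  refine ⟨fun x y _ hxy => hxy,
    fun c12 c23 x y h0x hxy =>
      c23 x y (c12 0 x (h1.refl 0) h0x) (c12 x y h0x hxy),
    fun c12 c21 => ?_⟩
  have key : ∀ (p q : R → R → Prop), IsQuasiOrdering p → IsQuasiOrdering q →
      Coarser p q → Coarser q p → ∀ x y, p x y → q x y := by
    intro p q hp hq cpq cqp x y hxy
    have e : ∀ z, p 0 z ↔ q 0 z := fun z =>
      ⟨fun hz => cpq 0 z (hp.refl 0) hz, fun hz => cqp 0 z (hq.refl 0) hz⟩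
    by_cases h0x : p 0 x
    · exact cpq x y h0x hxy
    · by_cases h0y : p 0 y
      · have hq0y : q 0 y := (e y).mp h0y
        have hqx0 : q x 0 :=
          (hq.total x 0).resolve_right (fun hh => h0x ((e x).mpr hh))
        exact hq.trans _ _ _ hqx0 hq0y
      · have hflip := qo_flip hp h0x h0y hxy
        have h0ny : p 0 (-y) :=
          (hp.total 0 (-y)).resolve_right (qo_neg_of_neg hp h0y)
        have hq' : q (-y) (-x) := cpq (-y) (-x) h0ny hflip
        exact qo_unflip hq (fun hh => h0x ((e x).mpr hh))
          (fun hh => h0y ((e y).mpr hh)) hq'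
  funext x y
  exact propext ⟨key p₁ p₂ h1 h2 c12 c21 x y, key p₂ p₁ h2 h1 c21 c12 x y⟩
end

section
/- Let q be a prime ideal of the unital ring R and ⪯_q the trivial quasi-ordering with support q (x ⪯_q y iff x ∈ q or y ∉ q). Then ⪯_q is coarser than every quasi-ordering ⪯ on R with support q, i.e., 0 ⪯ x ⪯ y implies x ⪯_q y. -/
variable {R : Type*} [Ring R]

/-- A (completely) prime two-sided ideal of `R`, given as a set. -/
structure IsCompletelyPrimeIdeal (q : Set R) : Prop where
  zero_mem : (0 : R) ∈ q
  add_mem : ∀ {x y : R}, x ∈ q → y ∈ q → x + y ∈ q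
  neg_mem : ∀ {x : R}, x ∈ q → -x ∈ q
  mul_mem_left : ∀ (r : R) {x : R}, x ∈ q → r * x ∈ q
  mul_mem_right : ∀ (r : R) {x : R}, x ∈ q → x * r ∈ q
  one_not_mem : (1 : R) ∉ q
  mem_or_mem : ∀ {x y : R}, x * y ∈ q → x ∈ q ∨ y ∈ q

/-- Proposition 4.5: for a prime ideal q, the trivial quasi-ordering with
support q (x ⪯_q y iff x ∈ q or y ∉ q) is coarser than every quasi-ordering
with support q. -/
theorem trivial_quasiOrdering_is_maximum (q : Set R) (hq : IsCompletelyPrimeIdeal q)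
    (p : R → R → Prop) (hp : IsQuasiOrdering p)
    (hsupp : ∀ x : R, (p x 0 ∧ p 0 x) ↔ x ∈ q) :
    Coarser p (fun x y : R => x ∈ q ∨ y ∉ q) := by
  intro x y h0x hxy
  by_cases hy : y ∈ q
  · left
    exact (hsupp x).mp ⟨hp.trans x y 0 hxy ((hsupp y).mpr hy).1, h0x⟩
  · right; exact hy
end

section
/- Let q be a prime ideal of a unital ring R and let ⪯, ⪯₁, ⪯₂ be quasi-orderings on R with support q such that ⪯ ≤ ⪯₁ and ⪯ ≤ ⪯₂. Then ⪯₁ ≤ ⪯₂ or ⪯₂ ≤ ⪯₁. Consequently, the set of quasi-orderings on R with support q, ordered by ≤, is a tree with maximum the trivial quasi-ordering ⪯_q. -/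
variable {R : Type*} [Ring R]

namespace QOAux

variable {q : Set R} {p : R → R → Prop}

/-- left multiplication by a nonnegative element -/
lemma mulL (hp : IsQuasiOrdering p) {a x y : R} (ha : p 0 a) (h : p x y) :
    p (a * x) (a * y) := by
  have := hp.qr2 a 1 x y ha hp.qr1.1 h
  simpa using this

lemma mulR (hp : IsQuasiOrdering p) {b x y : R} (hb : p 0 b) (h : p x y) :
    p (x * b) (y * b) := by
  have := hp.qr2 1 b x y hp.qr1.1 hb h
  simpa using this

lemma cancelR (hp : IsQuasiOrdering p) {b x y : R} (hb : p 0 b) (hb0 : ¬ p b 0)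
    (h : p (x * b) (y * b)) : p x y :=
  hp.qr3 1 b x y hp.qr1.1 hp.qr1.2 hb hb0 (by simpa using h)

lemma cancelL (hp : IsQuasiOrdering p) {a x y : R} (ha : p 0 a) (ha0 : ¬ p a 0)
    (h : p (a * x) (a * y)) : p x y :=
  hp.qr3 a 1 x y ha ha0 hp.qr1.1 hp.qr1.2 (by simpa using h)

/-- x ⪯ 0 implies 0 ⪯ -x -/
lemma negNonneg (hp : IsQuasiOrdering p) (hq : IsCompletelyPrimeIdeal q)
    (hs : ∀ x : R, (p x 0 ∧ p 0 x) ↔ x ∈ q) {x : R} (hx : p x 0) : p 0 (-x) := by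
  by_cases hxq : x ∈ q
  · exact ((hs (-x)).mpr (hq.neg_mem hxq)).2
  · have cond : ¬ (p (-x) 0 ∧ p 0 (-x)) := by
      intro hc
      exact hxq (by simpa using hq.neg_mem ((hs (-x)).mp hc))
    have := hp.qr4 x 0 (-x) cond hx
    simpa using this

/-- sign merge: if x ∉ q but 0 ⪯ x and 0 ⪯ -x then x ∼ -x -/
lemma signMerge (hp : IsQuasiOrdering p) (hq : IsCompletelyPrimeIdeal q) (hs : ∀ x : R, (p x 0 ∧ p 0 x) ↔ x ∈ q)
    {x : R} (hxq : x ∉ q) (h1 : p 0 x) (h2 : p 0 (-x)) : p x (-x) ∧ p (-x) x := by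
  by_contra hc
  have cond : ¬ (p (-x) x ∧ p x (-x)) := fun hm => hc ⟨hm.2, hm.1⟩
  have h3 := hp.qr4 0 x (-x) cond h1
  simp only [zero_add, add_neg_cancel] at h3
  -- h3 : p (-x) 0
  have : (-x) ∈ q := (hs (-x)).mp ⟨h3, h2⟩
  exact hxq (by simpa using hq.neg_mem this)
/-- merge from difference in q -/
lemma mergeOfSub (hp : IsQuasiOrdering p) (hq : IsCompletelyPrimeIdeal q)
    (hs : ∀ x : R, (p x 0 ∧ p 0 x) ↔ x ∈ q) {x y : R} (h : y - x ∈ q) :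
    p x y ∧ p y x := by
  by_cases hx : x ∈ q
  · have hy : y ∈ q := by
      have := hq.add_mem h hx
      simpa [sub_add_cancel] using this
    exact ⟨hp.trans x 0 y ((hs x).mpr hx).1 ((hs y).mpr hy).2,
      hp.trans y 0 x ((hs y).mpr hy).1 ((hs x).mpr hx).2⟩
  · have hsubq := (hs (y - x)).mpr h
    have hmx : ¬ (p x (y - x) ∧ p (y - x) x) := by
      intro hm
      exact hx ((hs x).mp ⟨hp.trans x (y - x) 0 hm.1 hsubq.1,
        hp.trans 0 (y - x) x hsubq.2 hm.2⟩)
    have hm0 : ¬ (p x 0 ∧ p 0 x) := fun hm => hx ((hs x).mp hm)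
    have e1 := hp.qr4 0 (y - x) x hmx hsubq.2
    have e2 := hp.qr4 (y - x) 0 x hm0 hsubq.1
    rw [zero_add, sub_add_cancel] at e1 e2
    exact ⟨e1, e2⟩

/-- Dichotomy: if there is a strictly negative element, merged pairs differ by q -/
lemma dichotomy (hp : IsQuasiOrdering p) (hq : IsCompletelyPrimeIdeal q)
    (hs : ∀ x : R, (p x 0 ∧ p 0 x) ↔ x ∈ q) {m u v : R} (hm : ¬ p 0 m)
    (huv : p u v) (hvu : p v u) : v - u ∈ q := by
  by_cases hu : u ∈ q
  · have hv : v ∈ q := (hs v).mp ⟨hp.trans v u 0 hvu ((hs u).mpr hu).1,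
      hp.trans 0 u v ((hs u).mpr hu).2 huv⟩
    have := hq.add_mem hv (hq.neg_mem hu)
    simpa [sub_eq_add_neg] using this
  · by_cases hmerge : p u (-u) ∧ p (-u) u
    · exfalso
      obtain ⟨w, hw0, hwq, hww⟩ : ∃ w : R, p 0 w ∧ w ∉ q ∧ (p w (-w) ∧ p (-w) w) := by
        rcases hp.total 0 u with h | h
        · exact ⟨u, h, hu, hmerge⟩
        · refine ⟨-u, negNonneg hp hq hs h, fun hc => hu (by simpa using hq.neg_mem hc), ?_, ?_⟩
          · simpa using hmerge.2
          · simpa using hmerge.1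
      have hwstrict : ¬ p w 0 := fun h => hwq ((hs w).mp ⟨h, hw0⟩)
      have mw1 : p (w * w) (w * (-w)) := mulL hp hw0 hww.1
      have key : p (w * 1 * w) (w * (-1) * w) := by
        simpa [mul_neg, mul_one, neg_mul] using mw1
      have h1neg : p 1 (-1) := hp.qr3 w w 1 (-1) hw0 hwstrict hw0 hwstrict key
      apply hm
      rcases hp.total 0 m with h | h
      · exact h
      · have h0m : p 0 (-m) := negNonneg hp hq hs h
        have hx : p ((-m) * 1) ((-m) * (-1)) := mulL hp h0m h1neg
        simp only [mul_one, mul_neg, neg_neg] at hx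
        exact hp.trans 0 (-m) m h0m hx
    · have c1 : ¬ (p (-u) v ∧ p v (-u)) := by
        intro hc
        exact hmerge ⟨hp.trans u v (-u) huv hc.2, hp.trans (-u) v u hc.1 hvu⟩
      have c2 : ¬ (p (-u) u ∧ p u (-u)) := fun hc => hmerge ⟨hc.2, hc.1⟩
      have e1 := hp.qr4 u v (-u) c1 huv
      have e2 := hp.qr4 v u (-u) c2 hvu
      rw [add_neg_cancel] at e1 e2
      rw [show v + -u = v - u from (sub_eq_add_neg v u).symm] at e1 e2
      exact (hs (v - u)).mp ⟨e2, e1⟩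


lemma memOfMerge {p' : R → R → Prop} (hp' : IsQuasiOrdering p')
    (hs' : ∀ x : R, (p' x 0 ∧ p' 0 x) ↔ x ∈ q) {u v : R}
    (hm : p' u v ∧ p' v u) (hu : u ∈ q) : v ∈ q :=
  (hs' v).mp ⟨hp'.trans v u 0 hm.2 ((hs' u).mpr hu).1,
    hp'.trans 0 u v ((hs' u).mpr hu).2 hm.1⟩

lemma mergeOfMem {p' : R → R → Prop} (hp' : IsQuasiOrdering p')
    (hs' : ∀ x : R, (p' x 0 ∧ p' 0 x) ↔ x ∈ q) {u v : R}
    (hu : u ∈ q) (hv : v ∈ q) : p' u v ∧ p' v u :=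
  ⟨hp'.trans u 0 v ((hs' u).mpr hu).1 ((hs' v).mpr hv).2,
    hp'.trans v 0 u ((hs' v).mpr hv).1 ((hs' u).mpr hu).2⟩

/-- Reduce a general witness to either a nonnegative pair witness or a sign witness. -/
lemma reduceWitness {pa pb : R → R → Prop}
    (hp : IsQuasiOrdering p) (hpa : IsQuasiOrdering pa) (hpb : IsQuasiOrdering pb)
    (hq : IsCompletelyPrimeIdeal q)
    (hs : ∀ x : R, (p x 0 ∧ p 0 x) ↔ x ∈ q)
    (hsa : ∀ x : R, (pa x 0 ∧ pa 0 x) ↔ x ∈ q)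
    (ha : Coarser p pa) {u v : R}
    (huv : p u v) (h0v : p 0 v) (ma : pa u v ∧ pa v u) (mb : ¬ (pb u v ∧ pb v u)) :
    (∃ u' v', p 0 u' ∧ p u' v' ∧ (pa u' v' ∧ pa v' u') ∧ ¬ (pb u' v' ∧ pb v' u')) ∨
    (∃ m, ¬ p 0 m ∧ (pa m (-m) ∧ pa (-m) m) ∧ ¬ (pb m (-m) ∧ pb (-m) m)) := by
  by_cases h0u : p 0 u
  · exact Or.inl ⟨u, v, h0u, huv, ma, mb⟩
  · have huq : u ∉ q := fun h => h0u ((hs u).mpr h).2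
    have hu0 : p u 0 := (hp.total u 0).resolve_right h0u
    have h0nu : p 0 (-u) := negNonneg hp hq hs hu0
    have pa0v : pa 0 v := ha 0 v (hp.refl 0) h0v
    have pa0u : pa 0 u := hpa.trans 0 v u pa0v ma.2
    have pa0nu : pa 0 (-u) := ha 0 (-u) (hp.refl 0) h0nu
    have mau : pa u (-u) ∧ pa (-u) u := signMerge hpa hq hsa huq pa0u pa0nu
    by_cases mbu : pb u (-u) ∧ pb (-u) u
    · have manv : pa (-u) v ∧ pa v (-u) :=
        ⟨hpa.trans (-u) u v mau.2 ma.1, hpa.trans v u (-u) ma.2 mau.1⟩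
      have mbnv : ¬ (pb (-u) v ∧ pb v (-u)) := fun hc =>
        mb ⟨hpb.trans u (-u) v mbu.1 hc.1, hpb.trans v (-u) u hc.2 mbu.2⟩
      rcases hp.total (-u) v with h | h
      · exact Or.inl ⟨-u, v, h0nu, h, manv, mbnv⟩
      · exact Or.inl ⟨v, -u, h0v, h, ⟨manv.2, manv.1⟩, fun hc => mbnv ⟨hc.2, hc.1⟩⟩
    · exact Or.inr ⟨u, h0u, mau, mbu⟩

/-- Two nonnegative pair witnesses in opposite directions are contradictory. -/
lemma caseA (hp : IsQuasiOrdering p) {p₁ p₂ : R → R → Prop}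
    (hp₁ : IsQuasiOrdering p₁) (hp₂ : IsQuasiOrdering p₂)
    (hq : IsCompletelyPrimeIdeal q)
    (hs : ∀ x : R, (p x 0 ∧ p 0 x) ↔ x ∈ q)
    (hs₁ : ∀ x : R, (p₁ x 0 ∧ p₁ 0 x) ↔ x ∈ q)
    (hs₂ : ∀ x : R, (p₂ x 0 ∧ p₂ 0 x) ↔ x ∈ q)
    (h1 : Coarser p p₁) (h2 : Coarser p p₂) {u v s t : R}
    (h0u : p 0 u) (huv : p u v) (m1 : p₁ u v ∧ p₁ v u) (nm2 : ¬ (p₂ u v ∧ p₂ v u))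
    (h0s : p 0 s) (hst : p s t) (m2 : p₂ s t ∧ p₂ t s) (nm1 : ¬ (p₁ s t ∧ p₁ t s)) :
    False := by
  have uq : u ∉ q := fun h => nm2 (mergeOfMem hp₂ hs₂ h (memOfMerge hp₁ hs₁ m1 h))
  have sq : s ∉ q := fun h => nm1 (mergeOfMem hp₁ hs₁ h (memOfMerge hp₂ hs₂ m2 h))
  have h0v : p 0 v := hp.trans 0 u v h0u huv
  have h0t : p 0 t := hp.trans 0 s t h0s hst
  rcases hp.total (v * s) (u * t) with hcase | hcase
  · have h0vs : p 0 (v * s) := by simpa using mulR hp h0s h0v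
    have t2 : p₂ (v * s) (u * t) := h2 _ _ h0vs hcase
    have t3 : p₂ (u * t) (u * s) := mulL hp₂ (h2 0 u (hp.refl 0) h0u) m2.2
    have t4 : p₂ (v * s) (u * s) := hp₂.trans _ _ _ t2 t3
    have s02 : p₂ 0 s := h2 0 s (hp.refl 0) h0s
    have sstrict : ¬ p₂ s 0 := fun h => sq ((hs₂ s).mp ⟨h, s02⟩)
    have hvu : p₂ v u := cancelR hp₂ s02 sstrict t4
    exact nm2 ⟨h2 u v h0u huv, hvu⟩
  · have h0ut : p 0 (u * t) := by simpa using mulR hp h0t h0u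
    have t2 : p₁ (u * t) (v * s) := h1 _ _ h0ut hcase
    have t3 : p₁ (v * s) (u * s) := mulR hp₁ (h1 0 s (hp.refl 0) h0s) m1.2
    have t4 : p₁ (u * t) (u * s) := hp₁.trans _ _ _ t2 t3
    have u01 : p₁ 0 u := h1 0 u (hp.refl 0) h0u
    have ustrict : ¬ p₁ u 0 := fun h => uq ((hs₁ u).mp ⟨h, u01⟩)
    have hts : p₁ t s := cancelL hp₁ u01 ustrict t4
    exact nm1 ⟨h1 s t h0s hst, hts⟩

/-- A pair witness for pa against pb, together with a sign witness for pb against pa,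
is contradictory. -/
lemma caseBC {pa pb : R → R → Prop}
    (hp : IsQuasiOrdering p) (hpa : IsQuasiOrdering pa) (hpb : IsQuasiOrdering pb)
    (hq : IsCompletelyPrimeIdeal q)
    (hs : ∀ x : R, (p x 0 ∧ p 0 x) ↔ x ∈ q)
    (hsa : ∀ x : R, (pa x 0 ∧ pa 0 x) ↔ x ∈ q)
    (hsb : ∀ x : R, (pb x 0 ∧ pb 0 x) ↔ x ∈ q)
    (ha : Coarser p pa) {u v n : R}
    (ma : pa u v ∧ pa v u) (nmb : ¬ (pb u v ∧ pb v u))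
    (hn0 : ¬ p 0 n) (nman : ¬ (pa n (-n) ∧ pa (-n) n)) : False := by
  have hnq : n ∉ q := fun h => hn0 ((hs n).mpr h).2
  have hn0' : p n 0 := (hp.total n 0).resolve_right hn0
  have h0nn : p 0 (-n) := negNonneg hp hq hs hn0'
  have pan0 : ¬ pa 0 n := fun h =>
    nman (signMerge hpa hq hsa hnq h (ha 0 (-n) (hp.refl 0) h0nn))
  have hd : v - u ∈ q := dichotomy hpa hq hsa pan0 ma.1 ma.2
  exact nmb (mergeOfSub hpb hq hsb hd)

/-- Two sign witnesses in opposite directions are contradictory. -/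
lemma caseD {pa : R → R → Prop}
    (hp : IsQuasiOrdering p) (hpa : IsQuasiOrdering pa)
    (hq : IsCompletelyPrimeIdeal q)
    (hs : ∀ x : R, (p x 0 ∧ p 0 x) ↔ x ∈ q)
    (hsa : ∀ x : R, (pa x 0 ∧ pa 0 x) ↔ x ∈ q)
    (ha : Coarser p pa) {m n : R}
    (hm0 : ¬ p 0 m) (mam : pa m (-m) ∧ pa (-m) m)
    (hn0 : ¬ p 0 n) (nman : ¬ (pa n (-n) ∧ pa (-n) n)) : False := by
  have hmq : m ∉ q := fun h => hm0 ((hs m).mpr h).2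
  have hnq : n ∉ q := fun h => hn0 ((hs n).mpr h).2
  have hn0' : p n 0 := (hp.total n 0).resolve_right hn0
  have h0nn : p 0 (-n) := negNonneg hp hq hs hn0'
  have pan0 : ¬ pa 0 n := fun h =>
    nman (signMerge hpa hq hsa hnq h (ha 0 (-n) (hp.refl 0) h0nn))
  have hd : (-m) - m ∈ q := dichotomy hpa hq hsa pan0 mam.1 mam.2
  have hmm : m + m ∈ q := by
    have := hq.neg_mem hd
    simpa [neg_sub, sub_neg_eq_add] using this
  have h2m : (2 : R) * m ∈ q := by rwa [two_mul]
  rcases hq.mem_or_mem h2m with h2 | h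
  · have h2n : (2 : R) * n ∈ q := hq.mul_mem_right n h2
    have hnn : n + n ∈ q := by rwa [two_mul] at h2n
    have : (-n) - n ∈ q := by
      have := hq.neg_mem hnn
      simpa [neg_add, sub_eq_add_neg] using this
    exact nman (mergeOfSub hpa hq hsa this)
  · exact hmq h


/-- If every merged pair of pa (witnessed along p) is merged by pb, then pa ≤ pb. -/
lemma coarserOf {pa pb : R → R → Prop}
    (hp : IsQuasiOrdering p) (hpa : IsQuasiOrdering pa) (hpb : IsQuasiOrdering pb)
    (hq : IsCompletelyPrimeIdeal q)
    (hs : ∀ x : R, (p x 0 ∧ p 0 x) ↔ x ∈ q)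
    (hsa : ∀ x : R, (pa x 0 ∧ pa 0 x) ↔ x ∈ q)
    (ha : Coarser p pa) (hb : Coarser p pb)
    (K : ∀ u v : R, p u v → p 0 v → pa u v → pa v u → pb u v ∧ pb v u) :
    Coarser pa pb := by
  have lemA : ∀ x y : R, p 0 x → pa x y → pb x y := by
    intro x y h0x hxy
    by_cases h0y : p 0 y
    · rcases hp.total x y with h | h
      · exact hb x y h0x h
      · exact (K y x h h0x (ha y x h0y h) hxy).2
    · have hyq : y ∉ q := fun h => h0y ((hs y).mpr h).2
      have hy0 : p y 0 := (hp.total y 0).resolve_right h0y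
      have h0ny : p 0 (-y) := negNonneg hp hq hs hy0
      have pa0y : pa 0 y := hpa.trans 0 x y (ha 0 x (hp.refl 0) h0x) hxy
      have may : pa y (-y) ∧ pa (-y) y :=
        signMerge hpa hq hsa hyq pa0y (ha 0 (-y) (hp.refl 0) h0ny)
      have mby : pb y (-y) ∧ pb (-y) y :=
        K y (-y) (hp.trans y 0 (-y) hy0 h0ny) h0ny may.1 may.2
      rcases hp.total x (-y) with h | h
      · exact hpb.trans x (-y) y (hb x (-y) h0x h) mby.2
      · have paxny : pa x (-y) := hpa.trans x y (-y) hxy may.1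
        exact hpb.trans x (-y) y (K (-y) x h h0x (ha (-y) x h0ny h) paxny).2 mby.2
  intro x y h0x hxy
  by_cases hpx : p 0 x
  · exact lemA x y hpx hxy
  · have hxq : x ∉ q := fun h => hpx ((hs x).mpr h).2
    have hx0 : p x 0 := (hp.total x 0).resolve_right hpx
    have h0nx : p 0 (-x) := negNonneg hp hq hs hx0
    have max : pa x (-x) ∧ pa (-x) x :=
      signMerge hpa hq hsa hxq h0x (ha 0 (-x) (hp.refl 0) h0nx)
    have mbx : pb x (-x) ∧ pb (-x) x :=
      K x (-x) (hp.trans x 0 (-x) hx0 h0nx) h0nx max.1 max.2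
    have hnxy : pa (-x) y := hpa.trans (-x) x y max.2 hxy
    exact hpb.trans x (-x) y mbx.1 (lemA (-x) y h0nx hnxy)

/-- Nestedness: there cannot be witnesses in both directions. -/
lemma nest {p₁ p₂ : R → R → Prop}
    (hp : IsQuasiOrdering p) (hp₁ : IsQuasiOrdering p₁) (hp₂ : IsQuasiOrdering p₂)
    (hq : IsCompletelyPrimeIdeal q)
    (hs : ∀ x : R, (p x 0 ∧ p 0 x) ↔ x ∈ q)
    (hs₁ : ∀ x : R, (p₁ x 0 ∧ p₁ 0 x) ↔ x ∈ q)
    (hs₂ : ∀ x : R, (p₂ x 0 ∧ p₂ 0 x) ↔ x ∈ q)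
    (h1 : Coarser p p₁) (h2 : Coarser p p₂)
    (w12 : ∃ u v : R, p u v ∧ p 0 v ∧ (p₁ u v ∧ p₁ v u) ∧ ¬ (p₂ u v ∧ p₂ v u))
    (w21 : ∃ u v : R, p u v ∧ p 0 v ∧ (p₂ u v ∧ p₂ v u) ∧ ¬ (p₁ u v ∧ p₁ v u)) :
    False := by
  obtain ⟨a, b, hab, h0b, m1ab, nm2ab⟩ := w12
  obtain ⟨c, d, hcd, h0d, m2cd, nm1cd⟩ := w21
  rcases reduceWitness hp hp₁ hp₂ hq hs hs₁ h1 hab h0b m1ab nm2ab with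
    ⟨u, v, h0u, huv, ma1, nmb1⟩ | ⟨m, hm0, mam, nmbm⟩
  · rcases reduceWitness hp hp₂ hp₁ hq hs hs₂ h2 hcd h0d m2cd nm1cd with
      ⟨s, t, h0s, hst, ma2, nmb2⟩ | ⟨n, hn0, man, nmbn⟩
    · exact caseA hp hp₁ hp₂ hq hs hs₁ hs₂ h1 h2 h0u huv ma1 nmb1 h0s hst ma2 nmb2
    · exact caseBC hp hp₁ hp₂ hq hs hs₁ hs₂ h1 ma1 nmb1 hn0 nmbn
  · rcases reduceWitness hp hp₂ hp₁ hq hs hs₂ h2 hcd h0d m2cd nm1cd with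
      ⟨s, t, h0s, hst, ma2, nmb2⟩ | ⟨n, hn0, man, nmbn⟩
    · exact caseBC hp hp₂ hp₁ hq hs hs₂ hs₁ h2 ma2 nmb2 hm0 nmbm
    · exact caseD hp hp₁ hq hs hs₁ h1 hm0 mam hn0 nmbn

end QOAux

/-- Proposition 4.8 and Theorem 4.9: if ⪯ ≤ ⪯₁, ⪯₂ all with support the prime
ideal q, then ⪯₁ ≤ ⪯₂ or ⪯₂ ≤ ⪯₁; moreover every quasi-ordering with support q
is finer than the trivial quasi-ordering ⪯_q, so the quasi-orderings with
support q form a tree with maximum ⪯_q. -/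
theorem quasiOrderings_with_support_form_tree (q : Set R) (hq : IsCompletelyPrimeIdeal q)
    (p p₁ p₂ : R → R → Prop)
    (hp : IsQuasiOrdering p) (hp₁ : IsQuasiOrdering p₁) (hp₂ : IsQuasiOrdering p₂)
    (hsupp : ∀ x : R, (p x 0 ∧ p 0 x) ↔ x ∈ q)
    (hsupp₁ : ∀ x : R, (p₁ x 0 ∧ p₁ 0 x) ↔ x ∈ q)
    (hsupp₂ : ∀ x : R, (p₂ x 0 ∧ p₂ 0 x) ↔ x ∈ q)
    (h1 : Coarser p p₁) (h2 : Coarser p p₂) :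
    (Coarser p₁ p₂ ∨ Coarser p₂ p₁) ∧
      Coarser p₁ (fun x y : R => x ∈ q ∨ y ∉ q) := by
  constructor
  · by_cases hW : ∃ u v : R, p u v ∧ p 0 v ∧ (p₁ u v ∧ p₁ v u) ∧ ¬ (p₂ u v ∧ p₂ v u)
    · right
      apply QOAux.coarserOf hp hp₂ hp₁ hq hsupp hsupp₂ h2 h1
      intro u v huv h0v m2uv m2vu
      by_contra nm1
      exact QOAux.nest hp hp₁ hp₂ hq hsupp hsupp₁ hsupp₂ h1 h2 hW
        ⟨u, v, huv, h0v, ⟨m2uv, m2vu⟩, nm1⟩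
    · left
      apply QOAux.coarserOf hp hp₁ hp₂ hq hsupp hsupp₁ h1 h2
      intro u v huv h0v m1uv m1vu
      by_contra nm2
      exact hW ⟨u, v, huv, h0v, ⟨m1uv, m1vu⟩, nm2⟩
  · intro x y h0x hxy
    by_cases hx : x ∈ q
    · exact Or.inl hx
    · refine Or.inr fun hy => hx ?_
      exact (hsupp₁ x).mp ⟨hp₁.trans x y 0 hxy ((hsupp₁ y).mpr hy).1, h0x⟩
end

section
/- Let R be a unital ring. The set of all quasi-orderings on R, with the relation ≤, is a tree if and only if R has precisely one prime ideal. (In particular, if R has two distinct prime ideals arising as supports of quasi-orderings, then ≤ has no maximum.) -/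
variable {R : Type*} [Ring R]

namespace QOAux

variable {p p' p₁ p₂ : R → R → Prop}

/-- The support of a quasi-ordering. -/
def ssupp (p : R → R → Prop) : Set R := {a | p a 0 ∧ p 0 a}

lemma mem_ssupp {a : R} : a ∈ ssupp p ↔ p a 0 ∧ p 0 a := Iff.rfl

/-- If `a ≺ 0` then `0 ≺ -a`. -/
lemma negpos (hp : IsQuasiOrdering p) {a : R} (h1 : p a 0) (h2 : ¬ p 0 a) :
    p 0 (-a) ∧ ¬ p (-a) 0 := by
  have hne : ¬ (p (-a) 0 ∧ p 0 (-a)) := by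
    rintro ⟨h3, h4⟩
    have h5 := hp.qr4 (-a) 0 a (by rintro ⟨ha0, h0a⟩; exact h2 h0a) h3
    rw [neg_add_cancel, zero_add] at h5
    exact h2 h5
  have h5 := hp.qr4 a 0 (-a) hne h1
  rw [add_neg_cancel, zero_add] at h5
  exact ⟨h5, fun hc => hne ⟨hc, h5⟩⟩

lemma supp_neg (hp : IsQuasiOrdering p) {a : R} (h : a ∈ ssupp p) : -a ∈ ssupp p := by
  obtain ⟨h1, h2⟩ := h
  by_cases h0 : p 0 (-a)
  · refine ⟨?_, h0⟩
    by_contra h3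
    by_cases hc : p (-a) a ∧ p a (-a)
    · exact h3 (hp.trans _ _ _ hc.1 h1)
    · have h4 := hp.qr4 0 a (-a) hc h2
      rw [zero_add, add_neg_cancel] at h4
      exact h3 h4
  · exfalso
    have hna : p (-a) 0 := (hp.total (-a) 0).resolve_right h0
    have := (negpos hp hna h0).2
    rw [neg_neg] at this
    exact this h1

lemma supp_add (hp : IsQuasiOrdering p) {a b : R} (ha : a ∈ ssupp p) (hb : b ∈ ssupp p) :
    a + b ∈ ssupp p := by
  by_contra h
  have hcond : ¬ (p (a + b) 0 ∧ p 0 (a + b)) := h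
  have hna := supp_neg hp ha
  have h1 := hp.qr4 (-a) 0 (a + b) hcond hna.1
  rw [show -a + (a + b) = b by abel, zero_add] at h1
  have hcond2 : ¬ (p (a + b) (-a) ∧ p (-a) (a + b)) := by
    rintro ⟨u1, u2⟩
    exact hcond ⟨hp.trans _ _ _ u1 hna.1, hp.trans _ _ _ hna.2 u2⟩
  have h2 := hp.qr4 0 (-a) (a + b) hcond2 hna.2
  rw [zero_add, show -a + (a + b) = b by abel] at h2
  exact hcond ⟨hp.trans _ _ _ h2 hb.1, hp.trans _ _ _ hb.2 h1⟩

lemma supp_mull_pos (hp : IsQuasiOrdering p) {r a : R} (hr : p 0 r) (h : a ∈ ssupp p) :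
    r * a ∈ ssupp p := by
  constructor
  · simpa using hp.qr2 r 1 a 0 hr hp.qr1.1 h.1
  · simpa using hp.qr2 r 1 0 a hr hp.qr1.1 h.2

lemma supp_mull (hp : IsQuasiOrdering p) (r : R) {a : R} (h : a ∈ ssupp p) :
    r * a ∈ ssupp p := by
  by_cases hr : p 0 r
  · exact supp_mull_pos hp hr h
  · have hr0 : p r 0 := (hp.total r 0).resolve_right hr
    have := supp_neg hp (supp_mull_pos hp (negpos hp hr0 hr).1 h)
    rwa [neg_mul, neg_neg] at this

lemma supp_mulr_pos (hp : IsQuasiOrdering p) {r a : R} (hr : p 0 r) (h : a ∈ ssupp p) :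
    a * r ∈ ssupp p := by
  constructor
  · have := hp.qr2 1 r a 0 hp.qr1.1 hr h.1
    simpa using this
  · have := hp.qr2 1 r 0 a hp.qr1.1 hr h.2
    simpa using this

lemma supp_mulr (hp : IsQuasiOrdering p) (r : R) {a : R} (h : a ∈ ssupp p) :
    a * r ∈ ssupp p := by
  by_cases hr : p 0 r
  · exact supp_mulr_pos hp hr h
  · have hr0 : p r 0 := (hp.total r 0).resolve_right hr
    have := supp_neg hp (supp_mulr_pos hp (negpos hp hr0 hr).1 h)
    rwa [mul_neg, neg_neg] at this

lemma pos_of_not_supp (hp : IsQuasiOrdering p) {a : R} (ha : a ∉ ssupp p) :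
    ∃ a', (a' = a ∨ a' = -a) ∧ p 0 a' ∧ ¬ p a' 0 := by
  by_cases h0 : p 0 a
  · exact ⟨a, Or.inl rfl, h0, fun hc => ha ⟨hc, h0⟩⟩
  · have h : p a 0 := (hp.total a 0).resolve_right h0
    obtain ⟨h1, h2⟩ := negpos hp h h0
    exact ⟨-a, Or.inr rfl, h1, h2⟩

lemma supp_prime (hp : IsQuasiOrdering p) {a b : R} (h : a * b ∈ ssupp p)
    (ha : a ∉ ssupp p) (hb : b ∉ ssupp p) : False := by
  obtain ⟨a', ha'e, ha'p, ha'n⟩ := pos_of_not_supp hp ha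
  obtain ⟨b', hb'e, hb'p, hb'n⟩ := pos_of_not_supp hp hb
  have hab : a' * b' ∈ ssupp p := by
    rcases ha'e with rfl | rfl <;> rcases hb'e with rfl | rfl
    · exact h
    · rw [mul_neg]; exact supp_neg hp h
    · rw [neg_mul]; exact supp_neg hp h
    · rw [neg_mul_neg]; exact h
  have := hp.qr3 a' b' 1 0 ha'p ha'n hb'p hb'n (by simpa using hab.1)
  exact hp.qr1.2 this

lemma supp_prime_ideal (hp : IsQuasiOrdering p) : IsCompletelyPrimeIdeal (ssupp p) where
  zero_mem := ⟨hp.refl 0, hp.refl 0⟩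
  add_mem := supp_add hp
  neg_mem := supp_neg hp
  mul_mem_left := fun r _ h => supp_mull hp r h
  mul_mem_right := fun r _ h => supp_mulr hp r h
  one_not_mem := fun h => hp.qr1.2 h.1
  mem_or_mem := fun {x y} h => by
    by_contra hc
    push_neg at hc
    exact supp_prime hp h hc.1 hc.2


/-! ### Valuation-type quasi-orderings: `p 0 (-1)` -/

lemma val_all (hp : IsQuasiOrdering p) (hv : p 0 (-1)) (z : R) : p 0 z := by
  by_contra h0
  have hz0 : p z 0 := (hp.total z 0).resolve_right h0
  obtain ⟨h1, -⟩ := negpos hp hz0 h0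
  have h2 := hp.qr2 (-1) 1 0 (-z) hv hp.qr1.1 h1
  rw [mul_zero, zero_mul, mul_one, neg_one_mul, neg_neg] at h2
  exact h0 h2

lemma val_negmap (hp : IsQuasiOrdering p) (hv : p 0 (-1)) {a b : R} (hab : p a b) :
    p (-a) (-b) := by
  have := hp.qr2 (-1) 1 a b hv hp.qr1.1 hab
  rwa [mul_one, mul_one, neg_one_mul, neg_one_mul] at this

lemma val_symm (hp : IsQuasiOrdering p) (hv : p 0 (-1)) (z : R) : p z (-z) ∧ p (-z) z := by
  rcases hp.total z (-z) with h | h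
  · refine ⟨h, ?_⟩
    have := val_negmap hp hv h
    rwa [neg_neg] at this
  · refine ⟨?_, h⟩
    have := val_negmap hp hv h
    rwa [neg_neg] at this

lemma val_rel_iff (hp : IsQuasiOrdering p) (hv : p 0 (-1)) {z z' w w' : R}
    (hz : z' = z ∨ z' = -z) (hw : w' = w ∨ w' = -w) : p z' w' ↔ p z w := by
  have hzz : p z z' ∧ p z' z := by
    rcases hz with rfl | rfl
    · exact ⟨hp.refl _, hp.refl _⟩
    · exact val_symm hp hv z
  have hww : p w w' ∧ p w' w := by
    rcases hw with rfl | rfl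
    · exact ⟨hp.refl _, hp.refl _⟩
    · exact val_symm hp hv w
  exact ⟨fun h => hp.trans _ _ _ hzz.1 (hp.trans _ _ _ h hww.2),
    fun h => hp.trans _ _ _ hzz.2 (hp.trans _ _ _ h hww.1)⟩

/-! ### Ordering-type quasi-orderings: `¬ p 0 (-1)` -/

/-- In an ordering-type quasi-ordering, no element outside the support is both
nonnegative and nonpositive (its negative nonnegative). -/
lemma ord_pm (hp : IsQuasiOrdering p) (ho : ¬ p 0 (-1)) {b : R} (hb : b ∉ ssupp p)
    (h1 : p 0 b) (h2 : p 0 (-b)) : False := by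
  have hm1 : p (-1) 0 := (hp.total (-1) 0).resolve_right ho
  have hb2 : p 0 (-(b * b)) := by
    have := hp.qr2 b 1 0 (-b) h1 hp.qr1.1 h2
    rwa [mul_zero, zero_mul, mul_one, mul_neg] at this
  have hbb : p (b * b) 0 := by
    have := hp.qr2 (-(b * b)) 1 (-1) 0 hb2 hp.qr1.1 hm1
    simp only [mul_one, mul_zero, zero_mul, mul_neg_one, neg_neg] at this
    exact this
  have hbb2 : p 0 (b * b) := by
    have := hp.qr2 b 1 0 b h1 hp.qr1.1 h1
    rwa [mul_zero, zero_mul, mul_one] at this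
  exact supp_prime hp ⟨hbb, hbb2⟩ hb hb

lemma ord_addpos (hp : IsQuasiOrdering p) (ho : ¬ p 0 (-1)) {a b : R}
    (h1 : p 0 a) (h2 : p 0 b) : p 0 (a + b) := by
  by_cases hc : p b a ∧ p a b
  · by_contra h3
    have hab0 : p (a + b) 0 := (hp.total (a + b) 0).resolve_right h3
    by_cases haS : a ∈ ssupp p
    · have hbS : b ∈ ssupp p := ⟨hp.trans _ _ _ hc.1 haS.1, hp.trans _ _ _ haS.2 hc.2⟩
      exact h3 (supp_add hp haS hbS).2
    · have hcond : ¬ (p (-a) 0 ∧ p 0 (-a)) := fun hn => haS (by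
        have := supp_neg hp hn
        rwa [neg_neg] at this)
      have h4 := hp.qr4 (a + b) 0 (-a) hcond hab0
      rw [show a + b + -a = b by abel, zero_add] at h4
      exact ord_pm hp ho haS h1 (hp.trans _ _ _ h2 h4)
  · have h4 := hp.qr4 0 a b hc h1
    rw [zero_add] at h4
    exact hp.trans _ _ _ h2 h4

/-- Helper: if `-b ∼ b` in an ordering-type quasi-ordering, then `b` is in the support. -/
lemma ord_negsymm_supp (hp : IsQuasiOrdering p) (ho : ¬ p 0 (-1)) {b : R}
    (hc : p (-b) b ∧ p b (-b)) : b ∈ ssupp p := by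
  by_cases hb0 : p 0 b
  · by_contra hbS
    exact ord_pm hp ho hbS hb0 (hp.trans _ _ _ hb0 hc.2)
  · exfalso
    have hb0' : p b 0 := (hp.total b 0).resolve_right hb0
    exact hb0 (hp.trans _ _ _ (negpos hp hb0' hb0).1 hc.1)

lemma ord_neg (hp : IsQuasiOrdering p) (ho : ¬ p 0 (-1)) {a b : R} (hab : p a b) :
    p (-b) (-a) := by
  by_cases hc : p (-(a + b)) b ∧ p b (-(a + b))
  · by_cases hbS : b ∈ ssupp p
    · have hcS : -(a + b) ∈ ssupp p := ⟨hp.trans _ _ _ hc.1 hbS.1, hp.trans _ _ _ hbS.2 hc.2⟩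
      have habS : (a + b) ∈ ssupp p := by
        have := supp_neg hp hcS; rwa [neg_neg] at this
      have haS : a ∈ ssupp p := by
        have := supp_add hp habS (supp_neg hp hbS)
        rwa [show a + b + -b = a by abel] at this
      exact hp.trans _ _ _ (supp_neg hp hbS).1 (supp_neg hp haS).2
    · by_cases hb0 : p 0 b
      · have hc0 : p 0 (-(a + b)) := hp.trans _ _ _ hb0 hc.2
        have hna : p 0 (-a) := by
          have := ord_addpos hp ho hc0 hb0
          rwa [show -(a + b) + b = -a by abel] at this
        have hnb : p (-b) 0 := by
          by_contra hx
          exact ord_pm hp ho hbS hb0 ((hp.total 0 (-b)).resolve_right hx)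
        exact hp.trans _ _ _ hnb hna
      · exfalso
        have hb0' : p b 0 := (hp.total b 0).resolve_right hb0
        have hcS : ¬ (-(a + b) ∈ ssupp p) := fun hS => hb0 (hp.trans _ _ _ hS.2 hc.1)
        have hc0 : p (-(a + b)) 0 := hp.trans _ _ _ hc.1 hb0'
        have hcneg : ¬ p 0 (-(a + b)) := fun hx => hcS ⟨hc0, hx⟩
        obtain ⟨hq1, -⟩ := negpos hp hc0 hcneg
        rw [neg_neg] at hq1
        have ha0 : ¬ p 0 a := fun hx => hb0 (hp.trans _ _ _ hx hab)
        obtain ⟨hq2, -⟩ := negpos hp ((hp.total a 0).resolve_right ha0) ha0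
        have hnbpos : p 0 (-b) := (negpos hp hb0' hb0).1
        have hsum := ord_addpos hp ho hq2 hnbpos
        rw [show -a + -b = -(a + b) by abel] at hsum
        have habS : (a + b) ∉ ssupp p := fun hS => hcS (supp_neg hp hS)
        exact ord_pm hp ho habS hq1 hsum
  · have := hp.qr4 a b (-(a + b)) hc hab
    rwa [show a + -(a + b) = -b by abel, show b + -(a + b) = -a by abel] at this

lemma ord_supp_of_equiv_core (hp : IsQuasiOrdering p) (ho : ¬ p 0 (-1)) {a b : R}
    (h1 : p a b) (h2 : p b a) (hd : a - b ∉ ssupp p) (hpos : p 0 (a - b)) : False := by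
  by_cases hc : p (-b) b ∧ p b (-b)
  · have hbS : b ∈ ssupp p := ord_negsymm_supp hp ho hc
    have haS : a ∈ ssupp p := ⟨hp.trans _ _ _ h1 hbS.1, hp.trans _ _ _ hbS.2 h2⟩
    have : a - b ∈ ssupp p := by
      have := supp_add hp haS (supp_neg hp hbS)
      rwa [← sub_eq_add_neg] at this
    exact hd this
  · have h2 := hp.qr4 a b (-b) hc h1
    rw [add_neg_cancel] at h2
    rw [show a + -b = a - b by rw [sub_eq_add_neg]] at h2
    exact hd ⟨h2, hpos⟩

/-- In an ordering-type quasi-ordering, equivalent elements differ by a support element. -/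
lemma ord_supp_of_equiv (hp : IsQuasiOrdering p) (ho : ¬ p 0 (-1)) {a b : R}
    (h1 : p a b) (h2 : p b a) : a - b ∈ ssupp p := by
  by_contra hd
  by_cases hpos : p 0 (a - b)
  · exact ord_supp_of_equiv_core hp ho h1 h2 hd hpos
  · have h0 : p (a - b) 0 := (hp.total (a - b) 0).resolve_right hpos
    obtain ⟨hq, -⟩ := negpos hp h0 hpos
    rw [neg_sub] at hq
    refine ord_supp_of_equiv_core hp ho h2 h1 (fun hS => hd ?_) hq
    have := supp_neg hp hS
    rwa [neg_sub] at this

/-- Conversely (any type): if `a - b` is in the support then `a ∼ b`. -/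
lemma equiv_of_sub_supp (hp : IsQuasiOrdering p) {a b : R} (hd : a - b ∈ ssupp p) :
    p a b ∧ p b a := by
  by_cases hbS : b ∈ ssupp p
  · have haS : a ∈ ssupp p := by
      have := supp_add hp hd hbS
      rwa [sub_add_cancel] at this
    exact ⟨hp.trans _ _ _ haS.1 hbS.2, hp.trans _ _ _ hbS.1 haS.2⟩
  · constructor
    · have := hp.qr4 (a - b) 0 b hbS hd.1
      rwa [sub_add_cancel, zero_add] at this
    · have hcond : ¬ (p b (a - b) ∧ p (a - b) b) := by
        rintro ⟨u1, u2⟩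
        exact hbS ⟨hp.trans _ _ _ u1 hd.1, hp.trans _ _ _ hd.2 u2⟩
      have := hp.qr4 0 (a - b) b hcond hd.2
      rwa [zero_add, sub_add_cancel] at this

lemma coarser_zero (hp : IsQuasiOrdering p) (hc : Coarser p p') {z : R} (h : p 0 z) :
    p' 0 z := hc 0 z (hp.refl 0) h

/-- Key lemma: an ordering-type coarsening with the same support refines back. -/
lemma keyO (hp : IsQuasiOrdering p) (hp' : IsQuasiOrdering p') (hc : Coarser p p')
    (ho' : ¬ p' 0 (-1)) (hs : ssupp p' = ssupp p) {a b : R} (hab : p' a b) : p a b := by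
  by_contra hnab
  have hba : p b a := (hp.total a b).resolve_left hnab
  have hneg0 : ∀ z : R, p z 0 → ¬ p 0 z → p' z 0 ∧ ¬ p' 0 z := by
    intro z h1 h2
    obtain ⟨h3, -⟩ := negpos hp h1 h2
    have h4 : p' 0 (-z) := coarser_zero hp hc h3
    have h5 : p' z 0 := by
      have := ord_neg hp' ho' h4
      rwa [neg_neg, neg_zero] at this
    refine ⟨h5, fun h6 => ?_⟩
    have hz : z ∈ ssupp p' := ⟨h5, h6⟩
    rw [hs] at hz
    exact h2 hz.2
  by_cases hbS : b ∈ ssupp p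
  · have hna0 : ¬ p a 0 := fun h => hnab (hp.trans _ _ _ h hbS.2)
    have h0a : p 0 a := (hp.total 0 a).resolve_right hna0
    have hbS' : b ∈ ssupp p' := by rw [hs]; exact hbS
    have haS' : a ∈ ssupp p' := ⟨hp'.trans _ _ _ hab hbS'.1, coarser_zero hp hc h0a⟩
    rw [hs] at haS'
    exact hna0 haS'.1
  · by_cases hb0 : p 0 b
    · have hba' : p' b a := hc b a hb0 hba
      have hS' : a - b ∈ ssupp p' := ord_supp_of_equiv hp' ho' hab hba'
      rw [hs] at hS'
      exact hnab (equiv_of_sub_supp hp hS').1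
    · have hb0' : p b 0 := (hp.total b 0).resolve_right hb0
      obtain ⟨hpb0, hpb0n⟩ := hneg0 b hb0' hb0
      by_cases ha0 : p 0 a
      · exact hpb0n (hp'.trans _ _ _ (coarser_zero hp hc ha0) hab)
      · have hoP : ¬ p 0 (-1) := fun hv => ha0 (val_all hp hv a)
        have ha0' : p a 0 := (hp.total a 0).resolve_right ha0
        have hnnab : ¬ p (-b) (-a) := fun h => hnab (by
          have := ord_neg hp hoP h
          rwa [neg_neg, neg_neg] at this)
        have hpnab : p (-a) (-b) := (hp.total (-a) (-b)).resolve_right hnnab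
        have h0na : p 0 (-a) := (negpos hp ha0' ha0).1
        have h1' : p' (-a) (-b) := hc _ _ h0na hpnab
        have h2' : p' (-b) (-a) := ord_neg hp' ho' hab
        have hS' : (-a) - (-b) ∈ ssupp p' := ord_supp_of_equiv hp' ho' h1' h2'
        rw [hs] at hS'
        have hS : a - b ∈ ssupp p := by
          have := supp_neg hp hS'
          rwa [show -(-a - -b) = a - b by abel] at this
        exact hnab (equiv_of_sub_supp hp hS).1

lemma exists_abs (hp : IsQuasiOrdering p) (z : R) :
    ∃ z', (z' = z ∨ z' = -z) ∧ p 0 z' := by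
  by_cases h0 : p 0 z
  · exact ⟨z, Or.inl rfl, h0⟩
  · exact ⟨-z, Or.inr rfl, (negpos hp ((hp.total z 0).resolve_right h0) h0).1⟩

lemma abs_not_supp (hp : IsQuasiOrdering p) {z z' : R} (he : z' = z ∨ z' = -z)
    (h : z ∉ ssupp p) : z' ∉ ssupp p := by
  rcases he with rfl | rfl
  · exact h
  · intro hS
    have := supp_neg hp hS
    rw [neg_neg] at this
    exact h this

/-- Linearity of coarsenings, under the assumption that all supports agree. -/
lemma linearity (hp : IsQuasiOrdering p) (hp1 : IsQuasiOrdering p₁) (hp2 : IsQuasiOrdering p₂)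
    (hs1 : ssupp p₁ = ssupp p) (hs2 : ssupp p₂ = ssupp p)
    (hc1 : Coarser p p₁) (hc2 : Coarser p p₂) :
    Coarser p₁ p₂ ∨ Coarser p₂ p₁ := by
  by_cases h1v : p₁ 0 (-1)
  · by_cases h2v : p₂ 0 (-1)
    · -- both valuation-type
      by_contra hcon
      simp only [Coarser, not_or, not_forall] at hcon
      obtain ⟨⟨x, y, hx0, hxy, hnxy⟩, ⟨u, v, hu0, huv, hnuv⟩⟩ := hcon
      have v1 : ∀ z : R, p₁ 0 z := val_all hp1 h1v
      have v2 : ∀ z : R, p₂ 0 z := val_all hp2 h2v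
      -- none of x, y, u, v lies in the common support
      have hyS : y ∉ ssupp p := by
        intro hS
        have hyS1 : y ∈ ssupp p₁ := by rw [hs1]; exact hS
        have hxS1 : x ∈ ssupp p₁ := ⟨hp1.trans _ _ _ hxy hyS1.1, v1 x⟩
        have hxS2 : x ∈ ssupp p₂ := by rw [hs2, ← hs1]; exact hxS1
        exact hnxy (hp2.trans _ _ _ hxS2.1 (v2 y))
      have hxS : x ∉ ssupp p := fun hS =>
        hnxy (hp2.trans _ _ _ (show x ∈ ssupp p₂ by rw [hs2]; exact hS).1 (v2 y))
      have hvS : v ∉ ssupp p := by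
        intro hS
        have hvS2 : v ∈ ssupp p₂ := by rw [hs2]; exact hS
        have huS2 : u ∈ ssupp p₂ := ⟨hp2.trans _ _ _ huv hvS2.1, v2 u⟩
        have huS1 : u ∈ ssupp p₁ := by rw [hs1, ← hs2]; exact huS2
        exact hnuv (hp1.trans _ _ _ huS1.1 (v1 v))
      have huS : u ∉ ssupp p := fun hS =>
        hnuv (hp1.trans _ _ _ (show u ∈ ssupp p₁ by rw [hs1]; exact hS).1 (v1 v))
      -- pass to nonnegative representatives
      obtain ⟨x', hx'e, hx'p⟩ := exists_abs hp x
      obtain ⟨y', hy'e, hy'p⟩ := exists_abs hp y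
      obtain ⟨u', hu'e, hu'p⟩ := exists_abs hp u
      obtain ⟨v', hv'e, hv'p⟩ := exists_abs hp v
      have hxy' : p₁ x' y' := (val_rel_iff hp1 h1v hx'e hy'e).mpr hxy
      have hnxy' : ¬ p₂ x' y' := fun h => hnxy ((val_rel_iff hp2 h2v hx'e hy'e).mp h)
      have huv' : p₂ u' v' := (val_rel_iff hp2 h2v hu'e hv'e).mpr huv
      have hnuv' : ¬ p₁ u' v' := fun h => hnuv ((val_rel_iff hp1 h1v hu'e hv'e).mp h)
      have hy'S : y' ∉ ssupp p := abs_not_supp hp hy'e hyS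
      have hu'S : u' ∉ ssupp p := abs_not_supp hp hu'e huS
      -- strictness in p
      have hnpxy : ¬ p x' y' := fun h => hnxy' (hc2 x' y' hx'p h)
      have hpyx : p y' x' := (hp.total x' y').resolve_left hnpxy
      have hnpuv : ¬ p u' v' := fun h => hnuv' (hc1 u' v' hu'p h)
      have hpvu : p v' u' := (hp.total u' v').resolve_left hnpuv
      -- products
      have hpxv : p 0 (x' * v') := by
        have := hp.qr2 x' 1 0 v' hx'p hp.qr1.1 hv'p
        rwa [mul_zero, zero_mul, mul_one] at this
      have hpyu : p 0 (y' * u') := by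
        have := hp.qr2 y' 1 0 u' hy'p hp.qr1.1 hu'p
        rwa [mul_zero, zero_mul, mul_one] at this
      rcases hp.total (y' * u') (x' * v') with hcase | hcase
      · have hA : p₁ (y' * u') (x' * v') := hc1 _ _ hpyu hcase
        have hB : p₁ (x' * v') (y' * v') := by
          have := hp1.qr2 1 v' x' y' hp1.qr1.1 (v1 v') hxy'
          rwa [one_mul, one_mul] at this
        have hC : p₁ (y' * u') (y' * v') := hp1.trans _ _ _ hA hB
        have hy'pos : ¬ p₁ y' 0 := fun h => hy'S (by rw [← hs1]; exact ⟨h, v1 y'⟩)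
        refine hnuv' (hp1.qr3 y' 1 u' v' (v1 y') hy'pos hp1.qr1.1 hp1.qr1.2 ?_)
        rwa [mul_one, mul_one]
      · have hA : p₂ (x' * v') (y' * u') := hc2 _ _ hpxv hcase
        have hB : p₂ (x' * u') (x' * v') := by
          have := hp2.qr2 x' 1 u' v' (v2 x') hp2.qr1.1 huv'
          rwa [mul_one, mul_one] at this
        have hC : p₂ (x' * u') (y' * u') := hp2.trans _ _ _ hB hA
        have hu'pos : ¬ p₂ u' 0 := fun h => hu'S (by rw [← hs2]; exact ⟨h, v2 u'⟩)
        refine hnxy' (hp2.qr3 1 u' x' y' hp2.qr1.1 hp2.qr1.2 (v2 u') hu'pos ?_)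
        rwa [one_mul, one_mul]
    · -- p₂ is ordering-type
      exact Or.inr fun a b h0 hab =>
        hc1 a b (keyO hp hp2 hc2 h2v hs2 h0) (keyO hp hp2 hc2 h2v hs2 hab)
  · -- p₁ is ordering-type
    exact Or.inl fun a b h0 hab =>
      hc2 a b (keyO hp hp1 hc1 h1v hs1 h0) (keyO hp hp1 hc1 h1v hs1 hab)

/-- The trivial quasi-ordering with support `q`. -/
def triv (q : Set R) : R → R → Prop := fun x y => x ∈ q ∨ y ∉ q

lemma triv_qo {q : Set R} (hq : IsCompletelyPrimeIdeal q) : IsQuasiOrdering (triv q) where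
  refl := fun x => by
    by_cases h : x ∈ q
    · exact Or.inl h
    · exact Or.inr h
  trans := fun x y z hxy hyz => by
    rcases hxy with h | h
    · exact Or.inl h
    · rcases hyz with h' | h'
      · exact absurd h' h
      · exact Or.inr h'
  total := fun x y => by
    by_cases hx : x ∈ q
    · exact Or.inl (Or.inl hx)
    · by_cases hy : y ∈ q
      · exact Or.inr (Or.inl hy)
      · exact Or.inl (Or.inr hy)
  qr1 := ⟨Or.inl hq.zero_mem, fun h => by
    rcases h with h | h
    · exact hq.one_not_mem h
    · exact h hq.zero_mem⟩
  qr2 := fun a b x y _ _ hxy => by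
    rcases hxy with h | h
    · exact Or.inl (hq.mul_mem_right b (hq.mul_mem_left a h))
    · by_cases hab : a * y * b ∈ q
      · rcases hq.mem_or_mem hab with h' | h'
        · rcases hq.mem_or_mem h' with h'' | h''
          · exact Or.inl (hq.mul_mem_right b (hq.mul_mem_right x h''))
          · exact absurd h'' h
        · exact Or.inl (hq.mul_mem_left (a * x) h')
      · exact Or.inr hab
  qr3 := fun a b x y _ hna _ hnb h => by
    have ha : a ∉ q := fun h' => hna (Or.inl h')
    have hb : b ∉ q := fun h' => hnb (Or.inl h')
    rcases h with h | h
    · rcases hq.mem_or_mem h with h' | h'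
      · rcases hq.mem_or_mem h' with h'' | h''
        · exact absurd h'' ha
        · exact Or.inl h''
      · exact absurd h' hb
    · refine Or.inr fun hy => h ?_
      exact hq.mul_mem_right b (hq.mul_mem_left a hy)
  qr4 := fun x y z hzy _ => by
    by_cases hz : z ∈ q <;> by_cases hy : y ∈ q
    · exact absurd ⟨Or.inl hz, Or.inl hy⟩ hzy
    · refine Or.inr fun h => hy ?_
      have := hq.add_mem h (hq.neg_mem hz)
      rwa [show y + z + -z = y by abel] at this
    · refine Or.inr fun h => hz ?_
      have := hq.add_mem h (hq.neg_mem hy)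
      rwa [show y + z + -y = z by abel] at this
    · exact absurd ⟨Or.inr hy, Or.inr hz⟩ hzy

/-- Every quasi-ordering whose support is `q` is finer than the trivial one. -/
lemma coarser_triv {q : Set R} (hp : IsQuasiOrdering p) (hsupp : ssupp p = q) :
    Coarser p (triv q) := by
  intro x y h0 hxy
  by_cases hx : x ∈ q
  · exact Or.inl hx
  · refine Or.inr fun hy => ?_
    rw [← hsupp] at hy hx
    exact hx ⟨hp.trans _ _ _ hxy hy.1, h0⟩

/-- If the trivial quasi-ordering of a prime `q` is finer than `m`, then `ssupp m = q`. -/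
lemma supp_of_coarser_triv {q : Set R} {m : R → R → Prop} (hm : IsQuasiOrdering m)
    (hq : IsCompletelyPrimeIdeal q) (hc : Coarser (triv q) m) : ssupp m = q := by
  ext z
  constructor
  · intro hz
    by_contra hzq
    have h1 : m 1 z := hc 1 z (Or.inl hq.zero_mem) (Or.inr hzq)
    exact hm.qr1.2 (hm.trans _ _ _ h1 hz.1)
  · intro hz
    exact ⟨hc z 0 (Or.inl hq.zero_mem) (Or.inl hz),
      hc 0 z (Or.inl hq.zero_mem) (Or.inl hq.zero_mem)⟩

end QOAux

/-- Proposition 4.11: the set of all quasi-orderings on R, partially ordered by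
the coarser relation, is a tree (has a maximum, and the coarsenings of any
element are linearly ordered) if and only if R has precisely one (completely)
prime ideal. -/
theorem all_quasiOrderings_tree_iff_unique_prime :
    ((∃ m : R → R → Prop, IsQuasiOrdering m ∧
        ∀ p : R → R → Prop, IsQuasiOrdering p → Coarser p m) ∧
      (∀ p p₁ p₂ : R → R → Prop, IsQuasiOrdering p → IsQuasiOrdering p₁ →
        IsQuasiOrdering p₂ → Coarser p p₁ → Coarser p p₂ →
        Coarser p₁ p₂ ∨ Coarser p₂ p₁)) ↔
    (∃! q : Set R, IsCompletelyPrimeIdeal q) := by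
  constructor
  · rintro ⟨⟨m, hm, hmax⟩, -⟩
    refine ⟨QOAux.ssupp m, QOAux.supp_prime_ideal hm, fun q hq => ?_⟩
    exact (QOAux.supp_of_coarser_triv hm hq (hmax _ (QOAux.triv_qo hq))).symm
  · rintro ⟨q, hq, huniq⟩
    constructor
    · exact ⟨QOAux.triv q, QOAux.triv_qo hq,
        fun p hp => QOAux.coarser_triv hp (huniq _ (QOAux.supp_prime_ideal hp))⟩
    · intro p p₁ p₂ hp hp1 hp2 hc1 hc2
      exact QOAux.linearity hp hp1 hp2
        ((huniq _ (QOAux.supp_prime_ideal hp1)).trans (huniq _ (QOAux.supp_prime_ideal hp)).symm)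
        ((huniq _ (QOAux.supp_prime_ideal hp2)).trans (huniq _ (QOAux.supp_prime_ideal hp)).symm)
        hc1 hc2
end

section
/- Let ⪯ be a quasi-ordering on a unital ring R and q a prime ideal of R. The following are equivalent: (1) q is ⪯-convex (0 ⪯ x ⪯ y with y ∈ q implies x ∈ q); (2) ⪯ ≤ ⪯₁ for some quasi-ordering ⪯₁ with support q; (3) ⪯ ≤ ⪯_q, where ⪯_q is the trivial quasi-ordering with support q. -/
variable {R : Type*} [Ring R]

/-- Proposition 4.14: for a quasi-ordering ⪯ and a prime ideal q, the
following are equivalent: (1) q is ⪯-convex; (2) ⪯ is finer than some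
quasi-ordering with support q; (3) ⪯ is finer than the trivial quasi-ordering
⪯_q. -/
theorem convex_iff_coarser_trivial (q : Set R) (hq : IsCompletelyPrimeIdeal q)
    (p : R → R → Prop) (hp : IsQuasiOrdering p) :
    ((∀ x y : R, p 0 x → p x y → y ∈ q → x ∈ q) ↔
        Coarser p (fun x y : R => x ∈ q ∨ y ∉ q)) ∧
    ((∃ p₁ : R → R → Prop, IsQuasiOrdering p₁ ∧
        (∀ x : R, (p₁ x 0 ∧ p₁ 0 x) ↔ x ∈ q) ∧ Coarser p p₁) ↔
        Coarser p (fun x y : R => x ∈ q ∨ y ∉ q)) := by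
  classical
  have htriv : IsQuasiOrdering (fun x y : R => x ∈ q ∨ y ∉ q) := by
    refine ⟨fun x => em _, ?_, ?_, ?_, ?_, ?_, ?_⟩
    · rintro x y z (hx | hy) (hy' | hz)
      · exact Or.inl hx
      · exact Or.inl hx
      · exact absurd hy' hy
      · exact Or.inr hz
    · intro x y
      by_cases hx : x ∈ q
      · exact Or.inl (Or.inl hx)
      · exact Or.inr (Or.inr hx)
    · exact ⟨Or.inl hq.zero_mem, fun h => h.elim hq.one_not_mem (fun h => h hq.zero_mem)⟩
    · rintro a b x y _ _ (hx | hy)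
      · exact Or.inl (hq.mul_mem_right b (hq.mul_mem_left a hx))
      · by_cases ha : a ∈ q
        · exact Or.inl (hq.mul_mem_right b (hq.mul_mem_right x ha))
        · by_cases hb : b ∈ q
          · exact Or.inl (hq.mul_mem_left _ hb)
          · refine Or.inr fun h => ?_
            rcases hq.mem_or_mem h with h' | h'
            · rcases hq.mem_or_mem h' with h'' | h''
              · exact ha h''
              · exact hy h''
            · exact hb h'
    · intro a b x y _ ha0 _ hb0 h
      have ha : a ∉ q := fun h => ha0 (Or.inl h)
      have hb : b ∉ q := fun h => hb0 (Or.inl h)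
      rcases h with h | h
      · rcases hq.mem_or_mem h with h' | h'
        · rcases hq.mem_or_mem h' with h'' | h''
          · exact absurd h'' ha
          · exact Or.inl h''
        · exact absurd h' hb
      · refine Or.inr fun hy => ?_
        exact h (hq.mul_mem_right b (hq.mul_mem_left a hy))
    · intro x y z hne hxy
      by_cases hz : z ∈ q
      · have hy : y ∉ q := fun hy => hne ⟨Or.inl hz, Or.inl hy⟩
        refine Or.inr fun h => hy ?_
        have := hq.add_mem h (hq.neg_mem hz)
        simpa using this
      · have hy : y ∈ q := by
          by_contra hy
          exact hne ⟨Or.inr hy, Or.inr hz⟩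
        have hx : x ∈ q := hxy.resolve_right (fun h => h hy)
        refine Or.inr fun h => hz ?_
        have := hq.add_mem (hq.neg_mem hy) h
        simpa using this
  constructor
  · constructor
    · intro hconv x y h0x hxy
      by_cases hy : y ∈ q
      · exact Or.inl (hconv x y h0x hxy hy)
      · exact Or.inr hy
    · intro hc x y h0x hxy hy
      exact (hc x y h0x hxy).resolve_right (fun h => h hy)
  · constructor
    · rintro ⟨p₁, hp₁, hsupp, hc⟩ x y h0x hxy
      by_cases hy : y ∈ q
      · have h1 : p₁ 0 x := hc 0 x (hp.refl 0) h0x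
        have h2 : p₁ x y := hc x y h0x hxy
        have h3 : p₁ y 0 := ((hsupp y).mpr hy).1
        exact Or.inl ((hsupp x).mp ⟨hp₁.trans x y 0 h2 h3, h1⟩)
      · exact Or.inr hy
    · intro hc
      refine ⟨fun x y => x ∈ q ∨ y ∉ q, htriv, fun x => ?_, hc⟩
      constructor
      · rintro ⟨hx0, _⟩
        exact hx0.resolve_right (fun h => h hq.zero_mem)
      · intro hx
        exact ⟨Or.inl hx, Or.inl hq.zero_mem⟩
end

section
/- Let (R, ⪯) be a quasi-ordered ring with support q. Then ⪯ is special (for every x ∉ q there exists y ∈ R with 1 ⪯ xy) if and only if q is the only proper ⪯-convex two-sided ideal of R. -/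
variable {R : Type*} [Ring R]

/-- A two-sided ideal of R, given as a set. -/
structure IsIdealSet (I : Set R) : Prop where
  zero_mem : (0 : R) ∈ I
  add_mem : ∀ {x y : R}, x ∈ I → y ∈ I → x + y ∈ I
  neg_mem : ∀ {x : R}, x ∈ I → -x ∈ I
  mul_mem_left : ∀ (r : R) {x : R}, x ∈ I → r * x ∈ I
  mul_mem_right : ∀ (r : R) {x : R}, x ∈ I → x * r ∈ I

namespace QOaux

variable {p : R → R → Prop}

lemma ptot (hp : IsQuasiOrdering p) {x y : R} (h : ¬ p x y) : p y x :=
  (hp.total x y).resolve_left h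

/-- L2 : p a 0 → p 0 (-a) -/
lemma L2 (hp : IsQuasiOrdering p) {a : R} (h : p a 0) : p 0 (-a) := by
  by_cases hc : p (-a) 0 ∧ p 0 (-a)
  · exact hc.2
  · have h1 := hp.qr4 a 0 (-a) hc h
    have e1 : a + -a = 0 := by first | noncomm_ring | abel
    have e2 : (0 : R) + -a = -a := by first | noncomm_ring | abel
    rw [e1, e2] at h1
    exact h1

/-- T1 : q closed under negation -/
lemma T1 (hp : IsQuasiOrdering p) {x : R} (hx0 : p x 0) (h0x : p 0 x) :
    p (-x) 0 ∧ p 0 (-x) := by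
  refine ⟨?_, L2 hp hx0⟩
  by_cases hc : p (-x) x ∧ p x (-x)
  · exact hp.trans _ _ _ hc.1 hx0
  · have h1 := hp.qr4 0 x (-x) hc h0x
    have e1 : (0:R) + -x = -x := by first | noncomm_ring | abel
    have e2 : x + -x = 0 := by first | noncomm_ring | abel
    rw [e1, e2] at h1
    exact h1

/-- T3 : q closed under addition -/
lemma T3 (hp : IsQuasiOrdering p) {x y : R} (hx : p x 0 ∧ p 0 x) (hy : p y 0 ∧ p 0 y) :
    p (x + y) 0 ∧ p 0 (x + y) := by
  by_cases hs : p (x + y) 0 ∧ p 0 (x + y)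
  · exact hs
  · exfalso
    have hnx := T1 hp hx.1 hx.2
    have h1 := hp.qr4 (-x) 0 (x + y) hs hnx.1
    have e1 : -x + (x + y) = y := by first | noncomm_ring | abel
    have e2 : (0:R) + (x + y) = x + y := by first | noncomm_ring | abel
    rw [e1, e2] at h1
    have h2cond : ¬ (p (x + y) (-x) ∧ p (-x) (x + y)) := by
      rintro ⟨c1, c2⟩
      exact hs ⟨hp.trans _ _ _ c1 hnx.1, hp.trans _ _ _ hnx.2 c2⟩
    have h2 := hp.qr4 0 (-x) (x + y) h2cond hnx.2
    have e3 : (0:R) + (x + y) = x + y := by first | noncomm_ring | abel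
    have e4 : -x + (x + y) = y := by first | noncomm_ring | abel
    rw [e3, e4] at h2
    exact hs ⟨hp.trans _ _ _ h2 hy.1, hp.trans _ _ _ hy.2 h1⟩

/-- translation by support elements -/
lemma Ltrans (hp : IsQuasiOrdering p) {e : R} (he0 : p e 0) (h0e : p 0 e) (w : R) :
    p (e + w) w ∧ p w (e + w) := by
  constructor
  · by_cases hw : p w 0 ∧ p 0 w
    · have := T3 hp ⟨he0, h0e⟩ hw
      exact hp.trans _ _ _ this.1 hw.2
    · have h1 := hp.qr4 e 0 w hw he0
      have e2 : (0:R) + w = w := by first | noncomm_ring | abel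
      rw [e2] at h1
      exact h1
  · by_cases hw : p w e ∧ p e w
    · have hwq : p w 0 ∧ p 0 w := ⟨hp.trans _ _ _ hw.1 he0, hp.trans _ _ _ h0e hw.2⟩
      have := T3 hp ⟨he0, h0e⟩ hwq
      exact hp.trans _ _ _ hwq.1 this.2
    · have h1 := hp.qr4 0 e w hw h0e
      have e2 : (0:R) + w = w := by first | noncomm_ring | abel
      rw [e2] at h1
      exact h1

/-- T2 left: q closed under left multiplication -/
lemma T2l (hp : IsQuasiOrdering p) (r : R) {x : R} (hx : p x 0 ∧ p 0 x) :
    p (r * x) 0 ∧ p 0 (r * x) := by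
  by_cases hr : p 0 r
  · have h1 := hp.qr2 r 1 x 0 hr hp.qr1.1 hx.1
    have h2 := hp.qr2 r 1 0 x hr hp.qr1.1 hx.2
    have e1 : r * x * 1 = r * x := by first | noncomm_ring | abel
    have e2 : r * 0 * 1 = (0 : R) := by first | noncomm_ring | abel
    rw [e1, e2] at h1 h2
    exact ⟨h1, h2⟩
  · have hr0 : p r 0 := ptot hp hr
    have h0nr : p 0 (-r) := L2 hp hr0
    have h1 := hp.qr2 (-r) 1 x 0 h0nr hp.qr1.1 hx.1
    have h2 := hp.qr2 (-r) 1 0 x h0nr hp.qr1.1 hx.2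
    have e1 : -r * x * 1 = -(r * x) := by first | noncomm_ring | abel
    have e2 : -r * 0 * 1 = (0 : R) := by first | noncomm_ring | abel
    rw [e1, e2] at h1 h2
    have := T1 hp h1 h2
    rwa [neg_neg] at this

/-- T2 right -/
lemma T2r (hp : IsQuasiOrdering p) (r : R) {x : R} (hx : p x 0 ∧ p 0 x) :
    p (x * r) 0 ∧ p 0 (x * r) := by
  by_cases hr : p 0 r
  · have h1 := hp.qr2 1 r x 0 hp.qr1.1 hr hx.1
    have h2 := hp.qr2 1 r 0 x hp.qr1.1 hr hx.2
    have e1 : 1 * x * r = x * r := by first | noncomm_ring | abel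
    have e2 : 1 * 0 * r = (0 : R) := by first | noncomm_ring | abel
    rw [e1, e2] at h1 h2
    exact ⟨h1, h2⟩
  · have hr0 : p r 0 := ptot hp hr
    have h0nr : p 0 (-r) := L2 hp hr0
    have h1 := hp.qr2 1 (-r) x 0 hp.qr1.1 h0nr hx.1
    have h2 := hp.qr2 1 (-r) 0 x hp.qr1.1 h0nr hx.2
    have e1 : 1 * x * -r = -(x * r) := by first | noncomm_ring | abel
    have e2 : 1 * 0 * -r = (0 : R) := by first | noncomm_ring | abel
    rw [e1, e2] at h1 h2
    have := T1 hp h1 h2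
    rwa [neg_neg] at this

/-- L4: 0 ⪯ u ⪯ z implies -u ⪯ z -/
lemma L4 (hp : IsQuasiOrdering p) {u z : R} (h0u : p 0 u) (huz : p u z) : p (-u) z := by
  have h0z : p 0 z := hp.trans _ _ _ h0u huz
  by_cases h1 : p (-u) 0
  · exact hp.trans _ _ _ h1 h0z
  · have h0nu : p 0 (-u) := ptot hp h1
    by_cases h2 : p (-u) u
    · exact hp.trans _ _ _ h2 huz
    · have hun : p u (-u) := ptot hp h2
      have hm := hp.qr2 u 1 u (-u) h0u hp.qr1.1 hun
      have e1 : u * u * 1 = -u * -u * 1 := by first | noncomm_ring | abel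
      have e2 : u * -u * 1 = -u * u * 1 := by first | noncomm_ring | abel
      rw [e1, e2] at hm
      exact absurd (hp.qr3 (-u) 1 (-u) u h0nu h1 hp.qr1.1 hp.qr1.2 hm) h2

/-- L3: absolute-value-like bound -/
lemma L3 (hp : IsQuasiOrdering p) (w : R) :
    ∃ s : R, (s = w ∨ s = -w) ∧ p 0 s ∧ p w s ∧ p (-w) s := by
  by_cases h : p 0 w
  · exact ⟨w, Or.inl rfl, h, hp.refl w, L4 hp h (hp.refl w)⟩
  · have hw0 : p w 0 := ptot hp h
    have h0 : p 0 (-w) := L2 hp hw0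
    have h3 := L4 hp h0 (hp.refl (-w))
    rw [neg_neg] at h3
    exact ⟨-w, Or.inr rfl, h0, h3, hp.refl (-w)⟩

/-- O1: in the ordered case, t ∼ -t implies t ∈ q -/
lemma O1 (hp : IsQuasiOrdering p) (hO : ¬ p 0 (-1)) {t : R}
    (h1 : p t (-t)) (h2 : p (-t) t) : p t 0 ∧ p 0 t := by
  by_cases h0 : p 0 t
  · by_cases ht0 : p t 0
    · exact ⟨ht0, h0⟩
    · exfalso
      have h0nt : p 0 (-t) := hp.trans _ _ _ h0 h1
      have hm : p (t * 0 * 1) (t * (-1) * 1) := by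
        have e1 : t * 0 * 1 = (0 : R) := by first | noncomm_ring | abel
        have e2 : t * (-1) * 1 = -t := by first | noncomm_ring | abel
        rw [e1, e2]
        exact h0nt
      exact hO (hp.qr3 t 1 0 (-1) h0 ht0 hp.qr1.1 hp.qr1.2 hm)
  · exfalso
    have ht0 : p t 0 := ptot hp h0
    have h0n : p 0 (-t) := L2 hp ht0
    exact h0 (hp.trans _ _ _ h0n h2)

/-- O2: in the ordered case, addition is fully compatible -/
lemma O2 (hp : IsQuasiOrdering p) (hO : ¬ p 0 (-1)) {x y : R} (h : p x y) (z : R) :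
    p (x + z) (y + z) := by
  by_cases hzy : p z y ∧ p y z
  · by_cases hyy : p y (-y) ∧ p (-y) y
    · have hy0 := O1 hp hO hyy.1 hyy.2
      have hz0 : p z 0 := hp.trans _ _ _ hzy.1 hy0.1
      have h0z : p 0 z := hp.trans _ _ _ hy0.2 hzy.2
      have LX := Ltrans hp hz0 h0z x
      have LY := Ltrans hp hz0 h0z y
      have a1 : p (x + z) x := by rw [add_comm]; exact LX.1
      have a2 : p y (y + z) := by rw [add_comm y z]; exact LY.2
      exact hp.trans _ _ _ (hp.trans _ _ _ a1 h) a2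
    · have h1 : p (x + -y) (y + -y) := hp.qr4 x y (-y)
        (fun ⟨c1, c2⟩ => hyy ⟨c2, c1⟩) h
      have e0 : y + -y = (0 : R) := by first | noncomm_ring | abel
      rw [e0] at h1
      by_cases hq : p (z + y) 0 ∧ p 0 (z + y)
      · exfalso
        have LZ := Ltrans hp hq.1 hq.2 (-z)
        have e : z + y + -z = y := by first | noncomm_ring | abel
        rw [e] at LZ
        have hz1 : p z (-z) := hp.trans _ _ _ hzy.1 LZ.1
        have hz2 : p (-z) z := hp.trans _ _ _ LZ.2 hzy.2
        have hz00 := O1 hp hO hz1 hz2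
        have hy0 : p y 0 := hp.trans _ _ _ hzy.2 hz00.1
        have h0y : p 0 y := hp.trans _ _ _ hz00.2 hzy.1
        have hny := T1 hp hy0 h0y
        exact hyy ⟨hp.trans _ _ _ hy0 hny.2, hp.trans _ _ _ hny.1 h0y⟩
      · have h2 := hp.qr4 (x + -y) 0 (z + y) hq h1
        have e1 : x + -y + (z + y) = x + z := by first | noncomm_ring | abel
        have e2 : (0 : R) + (z + y) = y + z := by first | noncomm_ring | abel
        rw [e1, e2] at h2
        exact h2
  · exact hp.qr4 x y z hzy h

/-- V0: in the valued case, t ∼ -t for all t -/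
lemma V0 (hp : IsQuasiOrdering p) (hV : p 0 (-1)) (t : R) : p t (-t) ∧ p (-t) t := by
  have mneg : ∀ u v : R, p u v → p (-u) (-v) := by
    intro u v h
    have := hp.qr2 (-1) 1 u v hV hp.qr1.1 h
    have e1 : (-1 : R) * u * 1 = -u := by first | noncomm_ring | abel
    have e2 : (-1 : R) * v * 1 = -v := by first | noncomm_ring | abel
    rwa [e1, e2] at this
  rcases hp.total t (-t) with h | h
  · have h2 := mneg _ _ h
    rw [neg_neg] at h2
    exact ⟨h, h2⟩
  · have h2 := mneg _ _ h
    rw [neg_neg] at h2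
    exact ⟨h2, h⟩

/-- V1: in the valued case, everything is nonnegative -/
lemma V1 (hp : IsQuasiOrdering p) (hV : p 0 (-1)) (t : R) : p 0 t := by
  rcases hp.total 0 t with h | h
  · exact h
  · exact hp.trans _ _ _ (L2 hp h) (V0 hp hV t).2

/-- G2: valued case: u ⪯ w implies u + w ⪯ w -/
lemma G2 (hp : IsQuasiOrdering p) (hV : p 0 (-1)) {u w : R} (h : p u w) :
    p (u + w) w := by
  by_contra hc
  by_cases hs : p (u + w) (w - (u + w)) ∧ p (w - (u + w)) (u + w)
  · have e : w - (u + w) = -u := by first | noncomm_ring | abel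
    rw [e] at hs
    have h1 : p (u + w) u := hp.trans _ _ _ hs.1 (V0 hp hV u).2
    exact hc (hp.trans _ _ _ h1 h)
  · have h1 := hp.qr4 0 (w - (u + w)) (u + w) hs (V1 hp hV _)
    have e1 : (0 : R) + (u + w) = u + w := by first | noncomm_ring | abel
    have e2 : w - (u + w) + (u + w) = w := by first | noncomm_ring | abel
    rw [e1, e2] at h1
    exact hc h1

/-- G: valued case ultrametric-type inequality -/
lemma G (hp : IsQuasiOrdering p) (hV : p 0 (-1)) {a b c : R}
    (ha : p a c) (hb : p b c) : p (a + b) c := by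
  by_contra hsc
  have hcs : p c (a + b) := ptot hp hsc
  -- (1) : a + b ∼ c - (a + b)
  have h1 : p (a + b) (c - (a + b)) ∧ p (c - (a + b)) (a + b) := by
    by_contra h1n
    have := hp.qr4 0 (c - (a + b)) (a + b) h1n (V1 hp hV _)
    have e1 : (0 : R) + (a + b) = a + b := by first | noncomm_ring | abel
    have e2 : c - (a + b) + (a + b) = c := by first | noncomm_ring | abel
    rw [e1, e2] at this
    exact hsc this
  -- d := (a+b) - c ∼ a + b
  have hV0d := V0 hp hV ((a + b) - c)
  have e1 : -((a + b) - c) = c - (a + b) := by first | noncomm_ring | abel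
  rw [e1] at hV0d
  have h2a : p (a + b) ((a + b) - c) := hp.trans _ _ _ h1.1 hV0d.2
  have h2b : p ((a + b) - c) (a + b) := hp.trans _ _ _ hV0d.1 h1.2
  -- (4)
  have h4 : p c ((a + b) - c) := hp.trans _ _ _ hcs h2a
  have h4s : ¬ p ((a + b) - c) c := fun hh => hsc (hp.trans _ _ _ h2a hh)
  -- (5)
  have h5 : ¬ p ((a + b) - c) a := fun hh => h4s (hp.trans _ _ _ hh ha)
  -- (6a): p d (a + d)
  have h6a : p ((a + b) - c) (a + ((a + b) - c)) := by
    have := hp.qr4 0 a ((a + b) - c) (fun ⟨c1, _⟩ => h5 c1) (V1 hp hV a)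
    have e2 : (0 : R) + ((a + b) - c) = (a + b) - c := by first | noncomm_ring | abel
    rw [e2] at this
    exact this
  -- (7)
  have hec : ¬ p (a + ((a + b) - c)) c := fun hh => h4s (hp.trans _ _ _ h6a hh)
  -- (9)
  have h9cond : ¬ (p a (c - (a + b)) ∧ p (c - (a + b)) a) := by
    rintro ⟨_, u2⟩
    exact hsc (hp.trans _ _ _ (hp.trans _ _ _ h1.1 u2) ha)
  have h9 := hp.qr4 (a + b) (c - (a + b)) a h9cond h1.1
  have e3 : c - (a + b) + a = c - b := by first | noncomm_ring | abel
  rw [e3] at h9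
  have hnb : p (-b) c := hp.trans _ _ _ (V0 hp hV b).2 hb
  have h9' : p (c - b) c := by
    have := G2 hp hV hnb
    have e4 : -b + c = c - b := by first | noncomm_ring | abel
    rwa [e4] at this
  have h9f : p (a + b + a) c := hp.trans _ _ _ h9 h9'
  -- (8a)
  have h8a : p (a + ((a + b) - c)) (c + (a + ((a + b) - c))) := by
    have := hp.qr4 0 c (a + ((a + b) - c)) (fun ⟨c1, _⟩ => hec c1) (V1 hp hV c)
    have e5 : (0 : R) + (a + ((a + b) - c)) = a + ((a + b) - c) := by
      first | noncomm_ring | abel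
    rw [e5] at this
    exact this
  have e6 : c + (a + ((a + b) - c)) = a + b + a := by first | noncomm_ring | abel
  rw [e6] at h8a
  exact hec (hp.trans _ _ _ h8a h9f)

/-- SPLIT: valued case: 1 ⪯ u + v implies 1 ⪯ u or 1 ⪯ v -/
lemma SPLIT (hp : IsQuasiOrdering p) (hV : p 0 (-1)) {u v : R}
    (h : p 1 (u + v)) : p 1 u ∨ p 1 v := by
  by_contra hn
  push_neg at hn
  obtain ⟨hn1, hn2⟩ := hn
  have hu1 : p u 1 := ptot hp hn1
  have hv1 : p v 1 := ptot hp hn2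
  have hsu : ¬ p (u + v) u := fun hh => hn1 (hp.trans _ _ _ h hh)
  have hcond : ¬ (p (u + v) (-u) ∧ p (-u) (u + v)) := by
    rintro ⟨c1, _⟩
    exact hsu (hp.trans _ _ _ c1 (V0 hp hV u).2)
  have hd := hp.qr4 0 (-u) (u + v) hcond (V1 hp hV (-u))
  have e1 : (0 : R) + (u + v) = u + v := by first | noncomm_ring | abel
  have e2 : -u + (u + v) = v := by first | noncomm_ring | abel
  rw [e1, e2] at hd
  exact hn2 (hp.trans _ _ _ h hd)

end QOaux

/-- Elements of the two-sided ideal generated by x. -/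
inductive InSpan (x : R) : R → Prop
  | base (a b : R) : InSpan x (a * x * b)
  | zero : InSpan x 0
  | add {u v : R} : InSpan x u → InSpan x v → InSpan x (u + v)

namespace InSpan

lemma mul_left {x u : R} (r : R) (h : InSpan x u) : InSpan x (r * u) := by
  induction h with
  | base a b =>
      have e : r * (a * x * b) = (r * a) * x * b := by noncomm_ring
      rw [e]; exact .base _ _
  | zero => rw [mul_zero]; exact .zero
  | add hu hv ihu ihv => rw [mul_add]; exact .add ihu ihv

lemma mul_right {x u : R} (r : R) (h : InSpan x u) : InSpan x (u * r) := by
  induction h with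
  | base a b =>
      have e : (a * x * b) * r = a * x * (b * r) := by noncomm_ring
      rw [e]; exact .base _ _
  | zero => rw [zero_mul]; exact .zero
  | add hu hv ihu ihv => rw [add_mul]; exact .add ihu ihv

lemma neg {x u : R} (h : InSpan x u) : InSpan x (-u) := by
  have e : -u = (-1 : R) * u := by noncomm_ring
  rw [e]; exact h.mul_left (-1)

end InSpan

namespace QOaux

/-- CORE: transfer a bound of shape s * X * b (s strictly positive) to X * (b * s) -/
lemma CORE (hp : IsQuasiOrdering p) {s X b : R}
    (h0s : p 0 s) (hsne : ¬ p s 0) (h : p 1 (s * X * b)) : p 1 (X * (b * s)) := by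
  have h1 := hp.qr2 1 s 1 (s * X * b) hp.qr1.1 h0s h
  have e1 : (1 : R) * 1 * s = s * 1 * 1 := by noncomm_ring
  have e2 : 1 * (s * X * b) * s = s * (X * (b * s)) * 1 := by noncomm_ring
  rw [e1, e2] at h1
  exact hp.qr3 s 1 1 (X * (b * s)) h0s hsne hp.qr1.1 hp.qr1.2 h1

/-- EXTRACT: from 1 ⪯ a x b produce y with 1 ⪯ x y -/
lemma EXTRACT (hp : IsQuasiOrdering p) {x a b : R} (hab : p 1 (a * x * b)) :
    ∃ y : R, p 1 (x * y) := by
  obtain ⟨s, hs, h0s, _, _⟩ := L3 hp a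
  have hsne : ¬ p s 0 := by
    intro hs0
    have hq : p a 0 ∧ p 0 a := by
      rcases hs with rfl | hs
      · exact ⟨hs0, h0s⟩
      · have hna : p (-a) 0 ∧ p 0 (-a) := by rw [← hs]; exact ⟨hs0, h0s⟩
        have := T1 hp hna.1 hna.2
        rwa [neg_neg] at this
    have h2 := T2r hp (x * b) hq
    have e : a * (x * b) = a * x * b := by noncomm_ring
    rw [e] at h2
    exact hp.qr1.2 (hp.trans _ _ _ hab h2.1)
  rcases hs with rfl | hs
  · exact ⟨b * s, CORE hp h0s hsne hab⟩
  · subst hs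
    have hab' : p 1 ((-a) * (-x) * b) := by
      have e : (-a) * (-x) * b = a * x * b := by noncomm_ring
      rw [e]; exact hab
    have h2 := CORE hp h0s hsne hab'
    have e2 : (-x) * (b * (-a)) = x * (b * a) := by noncomm_ring
    rw [e2] at h2
    exact ⟨b * a, h2⟩

/-- SUMRED: reduce a sum bound to a single product bound -/
lemma SUMRED (hp : IsQuasiOrdering p) {x z : R} (hz : InSpan x z) :
    ∀ n : ℕ, p 1 (n • z) → ∃ a b : R, p 1 (a * x * b) := by
  induction hz with
  | base a b =>
      intro n hn
      have e : n • (a * x * b) = ((n : R) * a) * x * b := by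
        rw [nsmul_eq_mul]; noncomm_ring
      rw [e] at hn
      exact ⟨_, _, hn⟩
  | zero =>
      intro n hn
      rw [smul_zero] at hn
      exact absurd hn hp.qr1.2
  | @add u v hu hv ihu ihv =>
      intro n hn
      rw [smul_add] at hn
      by_cases hV : p 0 (-1)
      · rcases SPLIT hp hV hn with h | h
        · exact ihu n h
        · exact ihv n h
      · rcases hp.total (n • v) (n • u) with hc | hc
        · have h2 : p (n • v + n • u) (n • u + n • u) := O2 hp hV hc (n • u)
          have h3 : p 1 ((2 * n) • u) := by
            have e : (2 * n) • u = n • u + n • u := by rw [two_mul, add_nsmul]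
            rw [e]
            refine hp.trans _ _ _ hn ?_
            rwa [add_comm (n • v) (n • u)] at h2
          exact ihu (2 * n) h3
        · have h2 : p (n • u + n • v) (n • v + n • v) := O2 hp hV hc (n • v)
          have h3 : p 1 ((2 * n) • v) := by
            have e : (2 * n) • v = n • v + n • v := by rw [two_mul, add_nsmul]
            rw [e]
            exact hp.trans _ _ _ hn h2
          exact ihv (2 * n) h3

end QOaux

/-- Proposition 5.9: a quasi-ordering ⪯ with support q is special (for every
x ∉ q there is y with 1 ⪯ xy) if and only if q is the only proper ⪯-convex
two-sided ideal of R. -/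
theorem special_iff_support_only_convex_ideal (p : R → R → Prop)
    (hp : IsQuasiOrdering p) :
    (∀ x : R, ¬ (p x 0 ∧ p 0 x) → ∃ y : R, p 1 (x * y)) ↔
      {I : Set R | IsIdealSet I ∧ (∀ x y : R, p 0 x → p x y → y ∈ I → x ∈ I) ∧
          I ≠ Set.univ} =
        {{x : R | p x 0 ∧ p 0 x}} := by
  constructor
  · intro hspec
    rw [Set.eq_singleton_iff_unique_mem]
    constructor
    · refine ⟨⟨⟨hp.refl 0, hp.refl 0⟩, ?_, ?_, ?_, ?_⟩, ?_, ?_⟩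
      · intro u v hu hv; exact QOaux.T3 hp hu hv
      · intro u hu; exact QOaux.T1 hp hu.1 hu.2
      · intro r u hu; exact QOaux.T2l hp r hu
      · intro r u hu; exact QOaux.T2r hp r hu
      · intro u v h0u huv hv; exact ⟨hp.trans _ _ _ huv hv.1, h0u⟩
      · intro he
        have h1 : (1:R) ∈ {x : R | p x 0 ∧ p 0 x} := by rw [he]; trivial
        exact hp.qr1.2 h1.1
    · rintro I ⟨hI, hconv, hne⟩
      ext w
      constructor
      · intro hw
        by_contra hwq
        obtain ⟨y, hy⟩ := hspec w hwq
        have h1I : (1:R) ∈ I := hconv 1 (w * y) hp.qr1.1 hy (hI.mul_mem_right y hw)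
        refine absurd ?_ hne
        apply Set.eq_univ_of_forall
        intro r
        have := hI.mul_mem_left r h1I
        rwa [mul_one] at this
      · intro hw
        exact hconv w 0 hw.2 hw.1 hI.zero_mem
  · intro h x hx
    set K : Set R := {w | ∃ z : R, InSpan x z ∧ p 0 z ∧ p w z ∧ p (-w) z} with hK
    have hKideal : IsIdealSet K := by
      constructor
      · exact ⟨0, .zero, hp.refl 0, hp.refl 0, by rw [neg_zero]; exact hp.refl 0⟩
      · rintro u v ⟨z, hz, h0z, huz, hnuz⟩ ⟨z', hz', h0z', hvz, hnvz⟩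
        by_cases hV : p 0 (-1)
        · rcases hp.total z' z with hzz | hzz
          · refine ⟨z, hz, h0z, QOaux.G hp hV huz (hp.trans _ _ _ hvz hzz), ?_⟩
            rw [neg_add]
            exact QOaux.G hp hV hnuz (hp.trans _ _ _ hnvz hzz)
          · refine ⟨z', hz', h0z', QOaux.G hp hV (hp.trans _ _ _ huz hzz) hvz, ?_⟩
            rw [neg_add]
            exact QOaux.G hp hV (hp.trans _ _ _ hnuz hzz) hnvz
        · refine ⟨z + z', hz.add hz', ?_, ?_, ?_⟩
          · have t1 := QOaux.O2 hp hV h0z z'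
            rw [zero_add] at t1
            exact hp.trans _ _ _ h0z' t1
          · have a1 := QOaux.O2 hp hV huz v
            have a2 := QOaux.O2 hp hV hvz z
            rw [add_comm v z, add_comm z' z] at a2
            exact hp.trans _ _ _ a1 a2
          · rw [neg_add]
            have a1 := QOaux.O2 hp hV hnuz (-v)
            have a2 := QOaux.O2 hp hV hnvz z
            rw [add_comm (-v) z, add_comm z' z] at a2
            exact hp.trans _ _ _ a1 a2
      · rintro u ⟨z, hz, h0z, h1, h2⟩
        exact ⟨z, hz, h0z, h2, by rw [neg_neg]; exact h1⟩
      · rintro r u ⟨z, hz, h0z, h1, h2⟩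
        obtain ⟨s, hs, h0s, -, -⟩ := QOaux.L3 hp r
        have hsz0 : p 0 (s * z) := by
          have := hp.qr2 s 1 0 z h0s hp.qr1.1 h0z
          have e1 : s * 0 * 1 = (0:R) := by noncomm_ring
          have e2 : s * z * 1 = s * z := by noncomm_ring
          rwa [e1, e2] at this
        rcases hs with rfl | hs
        · refine ⟨s * z, hz.mul_left s, hsz0, ?_, ?_⟩
          · have := hp.qr2 s 1 u z h0s hp.qr1.1 h1
            have e1 : s * u * 1 = s * u := by noncomm_ring
            have e2 : s * z * 1 = s * z := by noncomm_ring
            rwa [e1, e2] at this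
          · have := hp.qr2 s 1 (-u) z h0s hp.qr1.1 h2
            have e1 : s * (-u) * 1 = -(s * u) := by noncomm_ring
            have e2 : s * z * 1 = s * z := by noncomm_ring
            rwa [e1, e2] at this
        · subst hs
          refine ⟨-r * z, hz.mul_left (-r), hsz0, ?_, ?_⟩
          · have := hp.qr2 (-r) 1 (-u) z h0s hp.qr1.1 h2
            have e1 : -r * (-u) * 1 = r * u := by noncomm_ring
            have e2 : -r * z * 1 = -r * z := by noncomm_ring
            rwa [e1, e2] at this
          · have := hp.qr2 (-r) 1 u z h0s hp.qr1.1 h1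
            have e1 : -r * u * 1 = -(r * u) := by noncomm_ring
            have e2 : -r * z * 1 = -r * z := by noncomm_ring
            rwa [e1, e2] at this
      · rintro r u ⟨z, hz, h0z, h1, h2⟩
        obtain ⟨s, hs, h0s, -, -⟩ := QOaux.L3 hp r
        have hsz0 : p 0 (z * s) := by
          have := hp.qr2 1 s 0 z hp.qr1.1 h0s h0z
          have e1 : 1 * 0 * s = (0:R) := by noncomm_ring
          have e2 : 1 * z * s = z * s := by noncomm_ring
          rwa [e1, e2] at this
        rcases hs with rfl | hs
        · refine ⟨z * s, hz.mul_right s, hsz0, ?_, ?_⟩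
          · have := hp.qr2 1 s u z hp.qr1.1 h0s h1
            have e1 : 1 * u * s = u * s := by noncomm_ring
            have e2 : 1 * z * s = z * s := by noncomm_ring
            rwa [e1, e2] at this
          · have := hp.qr2 1 s (-u) z hp.qr1.1 h0s h2
            have e1 : 1 * (-u) * s = -(u * s) := by noncomm_ring
            have e2 : 1 * z * s = z * s := by noncomm_ring
            rwa [e1, e2] at this
        · subst hs
          refine ⟨z * -r, hz.mul_right (-r), hsz0, ?_, ?_⟩
          · have := hp.qr2 1 (-r) (-u) z hp.qr1.1 h0s h2
            have e1 : 1 * (-u) * -r = u * r := by noncomm_ring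
            have e2 : 1 * z * -r = z * -r := by noncomm_ring
            rwa [e1, e2] at this
          · have := hp.qr2 1 (-r) u z hp.qr1.1 h0s h1
            have e1 : 1 * u * -r = -(u * r) := by noncomm_ring
            have e2 : 1 * z * -r = z * -r := by noncomm_ring
            rwa [e1, e2] at this
    have hKconv : ∀ u v : R, p 0 u → p u v → v ∈ K → u ∈ K := by
      rintro u v h0u huv ⟨z, hz, h0z, hvz, -⟩
      have huz := hp.trans _ _ _ huv hvz
      exact ⟨z, hz, h0z, huz, QOaux.L4 hp h0u huz⟩
    have hxK : x ∈ K := by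
      obtain ⟨s, hs, h0s, h1s, h2s⟩ := QOaux.L3 hp x
      refine ⟨s, ?_, h0s, h1s, h2s⟩
      rcases hs with rfl | hs
      · simpa using InSpan.base (x := s) 1 1
      · subst hs
        simpa using (InSpan.base (x := x) 1 1).neg
    have hKuniv : K = Set.univ := by
      by_contra hKu
      have hKmem : K ∈ {I : Set R |
          IsIdealSet I ∧ (∀ x y : R, p 0 x → p x y → y ∈ I → x ∈ I) ∧
          I ≠ Set.univ} := ⟨hKideal, hKconv, hKu⟩
      rw [h] at hKmem
      have heq : K = {x : R | p x 0 ∧ p 0 x} := hKmem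
      rw [heq] at hxK
      exact hx hxK
    have h1K : (1:R) ∈ K := by rw [hKuniv]; trivial
    obtain ⟨z, hz, h0z, h1z, -⟩ := h1K
    obtain ⟨a, b, hab⟩ := QOaux.SUMRED hp hz 1 (by rwa [one_smul])
    exact QOaux.EXTRACT hp hab
end
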